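/- arXiv:1304.5438 — 4 statements merged into one kernel-verified Lean document; each statement's English description precedes it below -/
import Mathlib

section
/- Let (G,v₀,W) be a Banach–Mazur game on a finite graph and let P be a reasonable probability measure on Paths(G,v₀). If f is a bounded strategy for Player 0, then the set of plays consistent with f has P-measure 1. Consequently, if Player 0 has a bounded winning strategy for (G,v₀,W), then P(W) = 1. -/
open MeasureTheory
open scoped ENNReal NNReal

namespace BMGame

variable {V : Type*}

/-- The prefix of length `n` of the infinite sequence `ρ`. -/
def pref (ρ : ℕ → V) (n : ℕ) : List V := (List.range n).map ρ

/-- `ρ` is an infinite path of the graph `E` starting at `v₀`. -/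
def IsPlay (E : V → V → Prop) (v₀ : V) (ρ : ℕ → V) : Prop :=
  ρ 0 = v₀ ∧ ∀ n, E (ρ n) (ρ (n + 1))

/-- `π` is a nonempty finite path of the graph `E` starting at `v₀` (a position of the game). -/
def IsPos (E : V → V → Prop) (v₀ : V) (π : List V) : Prop :=
  π.head? = some v₀ ∧ π.Chain' E

/-- A strategy for player 0 assigns to each position the (nonempty) block of vertices
appended by player 0's move; `(π ++ f π).Chain' E` says that this block is a path
starting at the last vertex of `π`. -/
def IsStrategy (E : V → V → Prop) (v₀ : V) (f : List V → List V) : Prop :=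
  ∀ π, IsPos E v₀ π → f π ≠ [] ∧ (π ++ f π).Chain' E

/-- The play `ρ` is consistent with the strategy `f`: there are cut points
`c 0, c 1, …` (the lengths of the prefixes built after each move of player 1) such that
after each such prefix player 0 plays according to `f`, and player 1 then appends a
nonempty block. -/
def ConsGen (f : List V → List V) (ρ : ℕ → V) : Prop :=
  ∃ c : ℕ → ℕ, 1 ≤ c 0 ∧ ∀ i,
    pref ρ (c i + (f (pref ρ (c i))).length) = pref ρ (c i) ++ f (pref ρ (c i)) ∧
    c i + (f (pref ρ (c i))).length < c (i + 1)

/-- `f` is a winning strategy for player 0 in the Banach–Mazur game `(E, v₀, W)`. -/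
def WinningStrategy (E : V → V → Prop) (v₀ : V) (W : Set (ℕ → V))
    (f : List V → List V) : Prop :=
  IsStrategy E v₀ f ∧ ∀ ρ, IsPlay E v₀ ρ → ConsGen f ρ → ρ ∈ W

/-- The strategy `f` is `b`-bounded: each of its moves has length at most `b`. -/
def BoundedBy (E : V → V → Prop) (v₀ : V) (b : ℕ) (f : List V → List V) : Prop :=
  ∀ π, IsPos E v₀ π → (f π).length ≤ b

/-- A positional strategy assigns to each vertex the nonempty block appended. -/
def IsPositional (E : V → V → Prop) (f : V → List V) : Prop :=
  ∀ v, f v ≠ [] ∧ (v :: f v).Chain' E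

/-- Consistency with a positional strategy: after each prefix chosen by player 1,
player 0 plays `f` of the current (last) vertex. -/
def ConsPositional (f : V → List V) (ρ : ℕ → V) : Prop :=
  ∃ c : ℕ → ℕ, 1 ≤ c 0 ∧ ∀ i,
    pref ρ (c i + (f (ρ (c i - 1))).length) = pref ρ (c i) ++ f (ρ (c i - 1)) ∧
    c i + (f (ρ (c i - 1))).length < c (i + 1)

def PositionalWinning (E : V → V → Prop) (v₀ : V) (W : Set (ℕ → V)) (f : V → List V) : Prop :=
  IsPositional E f ∧ ∀ ρ, IsPlay E v₀ ρ → ConsPositional f ρ → ρ ∈ W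

/-- Structural requirement shared by move-counting and length-counting strategies:
for `n ≥ 1`, `h v n` is a nonempty block forming a path from `v`. -/
def IsCountingStrategy (E : V → V → Prop) (h : V → ℕ → List V) : Prop :=
  ∀ v n, 1 ≤ n → h v n ≠ [] ∧ (v :: h v n).Chain' E

/-- Consistency with a move-counting strategy: at its `i`-th move (`i ≥ 1`) player 0 plays
`h (current vertex) i`. -/
def ConsMoveCounting (h : V → ℕ → List V) (ρ : ℕ → V) : Prop :=
  ∃ c : ℕ → ℕ, 1 ≤ c 0 ∧ ∀ i,
    pref ρ (c i + (h (ρ (c i - 1)) (i + 1)).length) = pref ρ (c i) ++ h (ρ (c i - 1)) (i + 1) ∧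
    c i + (h (ρ (c i - 1)) (i + 1)).length < c (i + 1)

def MoveCountingWinning (E : V → V → Prop) (v₀ : V) (W : Set (ℕ → V))
    (h : V → ℕ → List V) : Prop :=
  IsCountingStrategy E h ∧ ∀ ρ, IsPlay E v₀ ρ → ConsMoveCounting h ρ → ρ ∈ W

/-- Consistency with a length-counting strategy: after a prefix of length `c i`
player 0 plays `h (current vertex) (c i)`. -/
def ConsLengthCounting (h : V → ℕ → List V) (ρ : ℕ → V) : Prop :=
  ∃ c : ℕ → ℕ, 1 ≤ c 0 ∧ ∀ i,
    pref ρ (c i + (h (ρ (c i - 1)) (c i)).length) = pref ρ (c i) ++ h (ρ (c i - 1)) (c i) ∧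
    c i + (h (ρ (c i - 1)) (c i)).length < c (i + 1)

def LengthCountingWinning (E : V → V → Prop) (v₀ : V) (W : Set (ℕ → V))
    (h : V → ℕ → List V) : Prop :=
  IsCountingStrategy E h ∧ ∀ ρ, IsPlay E v₀ ρ → ConsLengthCounting h ρ → ρ ∈ W

/-- The segment `ρ a, ρ (a+1), …, ρ (b-1)` of an infinite sequence. -/
def seg (ρ : ℕ → V) (a b : ℕ) : List V := (List.range (b - a)).map fun j => ρ (a + j)

/-- A last-move strategy is defined on all nonempty finite paths of the graph. -/
def IsLastMove (E : V → V → Prop) (g : List V → List V) : Prop :=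
  ∀ π, π ≠ [] → π.Chain' E → g π ≠ [] ∧ (π ++ g π).Chain' E

/-- Consistency with the last-move strategy `g`: the play decomposes as
`π₁ g(π₁) π₂ g(π₂) ⋯` where the `πᵢ` are the (nonempty) moves of player 1. -/
def ConsLastMove (g : List V → List V) (ρ : ℕ → V) : Prop :=
  ∃ s e : ℕ → ℕ, s 0 = 0 ∧ (∀ i, s i < e i) ∧ ∀ i,
    seg ρ (e i) (e i + (g (seg ρ (s i) (e i))).length) = g (seg ρ (s i) (e i)) ∧
    s (i + 1) = e i + (g (seg ρ (s i) (e i))).length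

def LastMoveWinning (E : V → V → Prop) (v₀ : V) (W : Set (ℕ → V)) (g : List V → List V) : Prop :=
  IsLastMove E g ∧ ∀ ρ, IsPlay E v₀ ρ → ConsLastMove g ρ → ρ ∈ W

/-- The cylinder generated by the finite word `π`. -/
def Cyl (π : List V) : Set (ℕ → V) := {ρ | pref ρ π.length = π}

/-- One-step transition probabilities obtained from the weights `w`. -/
noncomputable def transP [Fintype V] (E : V → V → Prop) (w : V → V → ℝ≥0) (u v : V) : ℝ≥0∞ := by
  classical
  exact if E u v then
    (w u v : ℝ≥0∞) / ∑ x ∈ Finset.univ.filter (fun x => E u x), (w u x : ℝ≥0∞)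
  else 0

/-- The probability of the cylinder generated by a finite word: the product of the
one-step transition probabilities along it. -/
noncomputable def pathP [Fintype V] (E : V → V → Prop) (w : V → V → ℝ≥0) (π : List V) : ℝ≥0∞ :=
  ((π.zip π.tail).map fun q => transP E w q.1 q.2).prod

/-- `P` is the reasonable probability measure associated with the weights `w`. -/
def IsReasonable [Fintype V] [MeasurableSpace (ℕ → V)] (E : V → V → Prop) (v₀ : V)
    (w : V → V → ℝ≥0) (P : Measure (ℕ → V)) : Prop :=
  IsProbabilityMeasure P ∧ ∀ π : List V, π.head? = some v₀ → P (Cyl π) = pathP E w π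

/-- `Ps` is a legal move of player 0 in the generalised game `G_α` at position `π`: a
finite nonempty set of nonempty finite paths from the last vertex of `π` whose union of
cylinders has conditional probability at least `α` given `Cyl π`. -/
def LegalProposal [MeasurableSpace (ℕ → V)] (E : V → V → Prop) (P : Measure (ℕ → V)) (α : ℝ)
    (π : List V) (Ps : Finset (List V)) : Prop :=
  Ps.Nonempty ∧ (∀ τ ∈ Ps, τ ≠ [] ∧ (π ++ τ).Chain' E) ∧
    ENNReal.ofReal α ≤ P (⋃ τ ∈ Ps, Cyl (π ++ τ)) / P (Cyl π)

/-- An α-strategy for player 0. -/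
def IsAlphaStrategy [MeasurableSpace (ℕ → V)] (E : V → V → Prop) (v₀ : V) (P : Measure (ℕ → V))
    (α : ℝ) (f : List V → Finset (List V)) : Prop :=
  ∀ π, IsPos E v₀ π → LegalProposal E P α π (f π)

/-- Consistency with an α-strategy: at each stage, player 1 picks some element of the
set proposed by player 0 and appends a nonempty block after it. -/
def ConsAlpha (f : List V → Finset (List V)) (ρ : ℕ → V) : Prop :=
  ∃ c : ℕ → ℕ, 1 ≤ c 0 ∧ ∀ i, ∃ τ ∈ f (pref ρ (c i)),
    pref ρ (c i + τ.length) = pref ρ (c i) ++ τ ∧ c i + τ.length < c (i + 1)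

def AlphaWinning [MeasurableSpace (ℕ → V)] (E : V → V → Prop) (v₀ : V) (P : Measure (ℕ → V))
    (α : ℝ) (W : Set (ℕ → V)) (f : List V → Finset (List V)) : Prop :=
  IsAlphaStrategy E v₀ P α f ∧ ∀ ρ, IsPlay E v₀ ρ → ConsAlpha f ρ → ρ ∈ W

/-- A strategy for player 1 in the generalised game `G_α` consists of an initial path and,
for each position together with a legal proposal of player 0, the selected element of the
proposal and the next (nonempty) block played by player 1. -/
def IsP1Strategy [MeasurableSpace (ℕ → V)] (E : V → V → Prop) (v₀ : V) (P : Measure (ℕ → V))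
    (α : ℝ) (init : List V) (g : List V → Finset (List V) → List V × List V) : Prop :=
  IsPos E v₀ init ∧
    ∀ π Ps, IsPos E v₀ π → LegalProposal E P α π Ps →
      (g π Ps).1 ∈ Ps ∧ (g π Ps).2 ≠ [] ∧ (π ++ ((g π Ps).1 ++ (g π Ps).2)).Chain' E

/-- Consistency of a play with player 1's strategy `(init, g)`:
there is a sequence of legal proposals of player 0 generating the play. -/
def ConsP1 [MeasurableSpace (ℕ → V)] (E : V → V → Prop) (P : Measure (ℕ → V)) (α : ℝ)
    (init : List V) (g : List V → Finset (List V) → List V × List V) (ρ : ℕ → V) : Prop :=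
  ∃ (Ps : ℕ → Finset (List V)) (p : ℕ → List V), p 0 = init ∧
    (∀ n, pref ρ (p n).length = p n) ∧
    ∀ n, LegalProposal E P α (p n) (Ps n) ∧
      p (n + 1) = p n ++ ((g (p n) (Ps n)).1 ++ (g (p n) (Ps n)).2)

def P1Winning [MeasurableSpace (ℕ → V)] (E : V → V → Prop) (v₀ : V) (P : Measure (ℕ → V))
    (α : ℝ) (W : Set (ℕ → V)) (init : List V)
    (g : List V → Finset (List V) → List V × List V) : Prop :=
  IsP1Strategy E v₀ P α init g ∧ ∀ ρ, IsPlay E v₀ ρ → ConsP1 E P α init g ρ → ρ ∉ W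

/-- A union of cylinders, i.e. an open subset of the space of sequences. -/
def IsCylOpen (U : Set (ℕ → V)) : Prop :=
  ∃ S : Set (List V), U = ⋃ π ∈ S, Cyl π

/-- `W` is a countable intersection of open subsets of the space `Paths (G, v₀)`. -/
def IsCountableInterOfOpens (E : V → V → Prop) (v₀ : V) (W : Set (ℕ → V)) : Prop :=
  ∃ U : ℕ → Set (ℕ → V), (∀ n, IsCylOpen (U n)) ∧
    W = {ρ | IsPlay E v₀ ρ} ∩ ⋂ n, U n

/-- For every `n`, the concatenation of the blocks `u 0, …, u (n-1)` is a prefix of `ρ`. -/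
def AgreesWithBlocks (ρ : ℕ → V) (u : ℕ → List V) : Prop :=
  ∀ n, pref ρ (((List.range n).map u).flatten).length = ((List.range n).map u).flatten

end BMGame

open BMGame
section AuxBM
open BMGame

variable {V : Type*}

lemma pref_length (ρ : ℕ → V) (n : ℕ) : (pref ρ n).length = n := by simp [pref]

lemma pref_getElem (ρ : ℕ → V) {n i : ℕ} (h : i < n) :
    (pref ρ n)[i]'(by simpa [pref_length] using h) = ρ i := by
  simp [pref]

lemma pref_take (ρ : ℕ → V) {m n : ℕ} (h : m ≤ n) : (pref ρ n).take m = pref ρ m := by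
  simp [pref, ← List.map_take, List.take_range, Nat.min_eq_left h, inf_eq_left.2 h]

lemma pref_eq_iff {ρ : ℕ → V} {π : List V} :
    pref ρ π.length = π ↔ ∀ i (h : i < π.length), ρ i = π[i] := by
  constructor
  · intro hp i h
    have h1 := pref_getElem ρ (n := π.length) h
    have h2 := List.getElem_of_eq hp (by simpa [pref_length] using h)
    exact h1.symm.trans h2
  · intro h
    refine List.ext_getElem (pref_length ..) fun i h1 h2 => ?_
    rw [pref_getElem ρ (by simpa [pref_length] using h1)]
    exact h i h2

lemma pref_congr {ρ ρ' : ℕ → V} {n m : ℕ} (h : ∀ i < n, ρ i = ρ' i) (hm : m ≤ n) :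
    pref ρ m = pref ρ' m := by
  unfold pref
  exact List.map_congr_left fun i hi => h i (lt_of_lt_of_le (List.mem_range.1 hi) hm)

lemma mem_Cyl {ρ : ℕ → V} {π : List V} : ρ ∈ Cyl π ↔ pref ρ π.length = π := Iff.rfl

lemma Cyl_append_subset (π τ : List V) : Cyl (π ++ τ) ⊆ Cyl π := by
  intro ρ hρ
  have h1 : pref ρ (π ++ τ).length = π ++ τ := hρ
  have h2 : (pref ρ (π ++ τ).length).take π.length = (π ++ τ).take π.length := by rw [h1]
  rwa [pref_take _ (by simp), List.take_left] at h2

lemma mem_Cyl_append {ρ : ℕ → V} {π τ : List V} :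
    ρ ∈ Cyl (π ++ τ) ↔ pref ρ (π.length + τ.length) = π ++ τ := by
  rw [mem_Cyl, List.length_append]

lemma measurableSet_cyl [MeasurableSpace V] [DiscreteMeasurableSpace V] (π : List V) :
    MeasurableSet (Cyl π) := by
  have h : Cyl π = ⋂ i : Fin π.length, (fun ρ : ℕ → V => ρ (i : ℕ)) ⁻¹' {π[(i : ℕ)]} := by
    ext ρ
    simp only [Set.mem_iInter, Set.mem_preimage, Set.mem_singleton_iff, mem_Cyl, pref_eq_iff]
    exact ⟨fun h i => h i i.isLt, fun h i hi => h ⟨i, hi⟩⟩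
  rw [h]
  exact MeasurableSet.iInter fun i => (measurable_pi_apply (i : ℕ)) MeasurableSet.of_discrete

lemma mem_cyl_ofFn {n : ℕ} {ρ : ℕ → V} {x : Fin n → V} :
    ρ ∈ Cyl (List.ofFn x) ↔ ∀ i : Fin n, ρ i = x i := by
  rw [mem_Cyl]
  have hl : (List.ofFn x).length = n := List.length_ofFn
  constructor
  · intro h i
    have := pref_eq_iff.1 (by rw [hl] at h ⊢; exact h) (i : ℕ) (by simpa [hl] using i.isLt)
    simpa using this
  · intro h
    have : pref ρ (List.ofFn x).length = List.ofFn x := by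
      refine pref_eq_iff.2 fun i hi => ?_
      have hi' : i < n := by simpa [hl] using hi
      simp [h ⟨i, hi'⟩]
    exact this

end AuxBM
section AuxBM2
open BMGame MeasureTheory
open scoped ENNReal NNReal

variable {V : Type*} [Fintype V]

lemma transP_eq_zero {E : V → V → Prop} {w : V → V → ℝ≥0} {u v : V} (h : ¬ E u v) :
    transP E w u v = 0 := by
  simp [transP, h]

lemma transP_le_one (E : V → V → Prop) (w : V → V → ℝ≥0) (u v : V) :
    transP E w u v ≤ 1 := by
  classical
  unfold transP
  split
  · rename_i h
    have hle : (w u v : ℝ≥0∞) ≤ ∑ x ∈ Finset.univ.filter (fun x => E u x), (w u x : ℝ≥0∞) :=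
      Finset.single_le_sum (f := fun x => (w u x : ℝ≥0∞)) (fun _ _ => zero_le)
        (Finset.mem_filter.2 ⟨Finset.mem_univ v, h⟩)
    exact le_trans (ENNReal.div_le_div_right hle _) ENNReal.div_self_le_one
  · exact zero_le_one

lemma transP_pos {E : V → V → Prop} {w : V → V → ℝ≥0} (hw : ∀ u v, E u v → 0 < w u v)
    {u v : V} (h : E u v) : 0 < transP E w u v := by
  classical
  unfold transP
  rw [if_pos h]
  refine ENNReal.div_pos ?_ ?_
  · simpa using (hw u v h).ne'
  · exact (ENNReal.sum_lt_top.2 fun _ _ => ENNReal.coe_lt_top).ne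

lemma pathP_nil (E : V → V → Prop) (w : V → V → ℝ≥0) : pathP E w [] = 1 := rfl

lemma pathP_single (E : V → V → Prop) (w : V → V → ℝ≥0) (v : V) : pathP E w [v] = 1 := rfl

lemma pathP_cons_cons (E : V → V → Prop) (w : V → V → ℝ≥0) (u v : V) (l : List V) :
    pathP E w (u :: v :: l) = transP E w u v * pathP E w (v :: l) := by
  simp [pathP, List.zip_cons_cons]

lemma pathP_append (E : V → V → Prop) (w : V → V → ℝ≥0) :
    ∀ (π : List V) (h : π ≠ []) (τ : List V),
      pathP E w (π ++ τ) = pathP E w π * pathP E w (π.getLast h :: τ)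
  | [], h, _ => absurd rfl h
  | [u], _, τ => by simp [pathP_single, List.getLast]
  | u :: v :: l, _, τ => by
    have ih := pathP_append E w (v :: l) (by simp) τ
    have e1 : (u :: v :: l) ++ τ = u :: ((v :: l) ++ τ) := rfl
    have e2 : (v :: l) ++ τ = v :: (l ++ τ) := rfl
    have hg : (u :: v :: l).getLast (by simp) = (v :: l).getLast (by simp) :=
      List.getLast_cons (by simp)
    rw [e1, e2, pathP_cons_cons, ← e2, ih, pathP_cons_cons, hg, mul_assoc]

lemma pathP_eq_zero (E : V → V → Prop) (w : V → V → ℝ≥0) :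
    ∀ (π : List V), ¬ π.Chain' E → pathP E w π = 0
  | [], h => absurd List.isChain_nil h
  | [v], h => absurd (List.isChain_singleton v) h
  | u :: v :: l, h => by
    unfold List.Chain' at h
    rw [List.isChain_cons_cons] at h
    rw [pathP_cons_cons]
    by_cases he : E u v
    · rw [pathP_eq_zero E w (v :: l) (fun hc => h ⟨he, hc⟩), mul_zero]
    · rw [transP_eq_zero he, zero_mul]

lemma pathP_lower (E : V → V → Prop) (w : V → V → ℝ≥0) (q : ℝ≥0∞)
    (hq : ∀ u v, E u v → q ≤ transP E w u v) :
    ∀ (u : V) (τ : List V), (u :: τ).Chain' E → q ^ τ.length ≤ pathP E w (u :: τ)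
  | _, [], _ => by simp [pathP_single]
  | u, v :: l, h => by
    unfold List.Chain' at h
    rw [List.isChain_cons_cons] at h
    rw [pathP_cons_cons, List.length_cons, pow_succ, mul_comm]
    exact mul_le_mul' (hq u v h.1) (pathP_lower E w q hq v l h.2)

/-- A set determined by the first `n` coordinates. -/
def DetBM (n : ℕ) (A : Set (ℕ → V)) : Prop :=
  ∀ ρ ρ' : ℕ → V, (∀ i < n, ρ i = ρ' i) → ρ ∈ A → ρ' ∈ A

lemma DetBM.mono {n m : ℕ} {A : Set (ℕ → V)} (h : DetBM n A) (hnm : n ≤ m) : DetBM m A :=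
  fun ρ ρ' hag => h ρ ρ' (fun i hi => hag i (lt_of_lt_of_le hi hnm))

lemma DetBM.inter {n : ℕ} {A B : Set (ℕ → V)} (hA : DetBM n A) (hB : DetBM n B) :
    DetBM n (A ∩ B) :=
  fun ρ ρ' hag hm => ⟨hA ρ ρ' hag hm.1, hB ρ ρ' hag hm.2⟩

lemma detBM_cyl (π : List V) : DetBM π.length (Cyl π) := by
  intro ρ ρ' hag hm
  rw [mem_Cyl] at hm ⊢
  rw [← pref_congr hag le_rfl]
  exact hm

lemma det_decomp (d : V) {n : ℕ} {A : Set (ℕ → V)} (hA : DetBM n A) :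
    ∃ S : Finset (Fin n → V), A = ⋃ x ∈ S, Cyl (List.ofFn x) := by
  classical
  set ext : (Fin n → V) → ℕ → V := fun x i => if h : i < n then x ⟨i, h⟩ else d with hext
  refine ⟨Finset.univ.filter (fun x => ext x ∈ A), ?_⟩
  ext ρ
  simp only [Set.mem_iUnion, Finset.mem_filter, Finset.mem_univ, true_and, exists_prop]
  constructor
  · intro hρ
    refine ⟨fun i => ρ i, ?_, mem_cyl_ofFn.2 fun i => rfl⟩
    exact hA ρ _ (fun i hi => by simp [hext, hi]) hρ
  · rintro ⟨x, hx, hρ⟩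
    refine hA _ ρ (fun i hi => ?_) hx
    simp [hext, hi, (mem_cyl_ofFn.1 hρ) ⟨i, hi⟩]

lemma cyl_ofFn_pairwise {n : ℕ} (S : Finset (Fin n → V)) :
    (↑S : Set (Fin n → V)).PairwiseDisjoint (fun x => Cyl (List.ofFn x)) := by
  intro x _ y _ hxy
  rw [Function.onFun, Set.disjoint_left]
  intro ρ hx hy
  exact hxy (funext fun i => ((mem_cyl_ofFn.1 hx) i).symm.trans ((mem_cyl_ofFn.1 hy) i))

lemma measure_det [MeasurableSpace V] [DiscreteMeasurableSpace V]
    (P : Measure (ℕ → V)) {n : ℕ} {S : Finset (Fin n → V)} {A : Set (ℕ → V)}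
    (hS : A = ⋃ x ∈ S, Cyl (List.ofFn x)) :
    P A = ∑ x ∈ S, P (Cyl (List.ofFn x)) := by
  rw [hS]
  exact measure_biUnion_finset (cyl_ofFn_pairwise S) (fun x _ => measurableSet_cyl _)

end AuxBM2
section AuxBM3
open BMGame MeasureTheory
open scoped ENNReal NNReal

variable {V : Type*}

lemma pref_one (ρ : ℕ → V) : pref ρ 1 = [ρ 0] := by simp [pref, List.range_succ]

lemma not_chain_pref {E : V → V → Prop} {ρ : ℕ → V} {n m : ℕ} (h : ¬ E (ρ n) (ρ (n + 1)))
    (hm : n + 2 ≤ m) : ¬ (pref ρ m).Chain' E := by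
  intro hc
  unfold List.Chain' at hc
  rw [List.isChain_iff_getElem] at hc
  have h2 := hc n (by simp [pref_length]; omega)
  apply h
  simpa [pref, List.get_eq_getElem] using h2

/-- The event that the strategy `f` is *not* followed at cut point `m`. -/
def FailBM (E : V → V → Prop) (v₀ : V) (f : List V → List V) (m : ℕ) : Set (ℕ → V) :=
  {ρ | ¬ (IsPos E v₀ (pref ρ m) ∧
      pref ρ (m + (f (pref ρ m)).length) = pref ρ m ++ f (pref ρ m))}

lemma detBM_fail {E : V → V → Prop} {v₀ : V} {f : List V → List V} {b : ℕ}
    (hb : BoundedBy E v₀ b f) (m : ℕ) : DetBM (m + b) (FailBM E v₀ f m) := by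
  intro ρ ρ' hag hm
  simp only [FailBM, Set.mem_setOf_eq] at hm ⊢
  rintro ⟨hpos', hblk'⟩
  apply hm
  have hpm : pref ρ m = pref ρ' m := pref_congr hag (Nat.le_add_right m b)
  have hpos : IsPos E v₀ (pref ρ m) := by rw [hpm]; exact hpos'
  have hL : (f (pref ρ' m)).length ≤ b := hb _ hpos'
  refine ⟨hpos, ?_⟩
  rw [hpm, pref_congr hag (by omega : m + (f (pref ρ' m)).length ≤ m + b)]
  exact hblk'

lemma consGen_of_inf {f : List V → List V} {ρ : ℕ → V}
    (h : ∀ N, ∃ m, N ≤ m ∧ 1 ≤ m ∧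
      pref ρ (m + (f (pref ρ m)).length) = pref ρ m ++ f (pref ρ m)) :
    ConsGen f ρ := by
  choose g h1 h2 h3 using h
  let c : ℕ → ℕ := fun i =>
    Nat.rec (g 0) (fun _ prev => g (prev + (f (pref ρ prev)).length + 1)) i
  have hc0 : c 0 = g 0 := rfl
  have hcs : ∀ i, c (i + 1) = g (c i + (f (pref ρ (c i))).length + 1) := fun _ => rfl
  refine ⟨c, by rw [hc0]; exact h2 0, fun i => ⟨?_, ?_⟩⟩
  · cases i with
    | zero => rw [hc0]; exact h3 0
    | succ n => rw [hcs n]; exact h3 _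
  · have hle := h1 (c i + (f (pref ρ (c i))).length + 1)
    rw [hcs i]
    omega

lemma det_inter_bound [Fintype V] [MeasurableSpace V] [DiscreteMeasurableSpace V]
    (P : Measure (ℕ → V)) (d : V) {n : ℕ} {A : Set (ℕ → V)} (F : Set (ℕ → V))
    (hA : DetBM n A) (r : ℝ≥0∞)
    (hcyl : ∀ π : List V, π.length = n → P (Cyl π ∩ F) ≤ r * P (Cyl π)) :
    P (A ∩ F) ≤ r * P A := by
  obtain ⟨S, hS⟩ := det_decomp d hA
  have h1 : A ∩ F = ⋃ x ∈ S, (Cyl (List.ofFn x) ∩ F) := by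
    rw [hS]; ext ρ; simp only [Set.mem_inter_iff, Set.mem_iUnion, exists_prop]; tauto
  calc P (A ∩ F) ≤ ∑ x ∈ S, P (Cyl (List.ofFn x) ∩ F) := by
        rw [h1]; exact measure_biUnion_finset_le S _
    _ ≤ ∑ x ∈ S, r * P (Cyl (List.ofFn x)) :=
        Finset.sum_le_sum fun x _ => hcyl _ (by simp)
    _ = r * P A := by rw [measure_det P hS, Finset.mul_sum]

lemma cyl_fail_bound [Fintype V] [MeasurableSpace V] [DiscreteMeasurableSpace V]
    {E : V → V → Prop} {v₀ : V} {w : V → V → ℝ≥0} {P : Measure (ℕ → V)}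
    [IsFiniteMeasure P]
    (hcylP : ∀ π : List V, π.head? = some v₀ → P (Cyl π) = pathP E w π)
    (hnull : ∀ π : List V, π ≠ [] → ¬ IsPos E v₀ π → P (Cyl π) = 0)
    {f : List V → List V} {b : ℕ} (hf : IsStrategy E v₀ f) (hb : BoundedBy E v₀ b f)
    {δ : ℝ≥0∞} (hδ : ∀ (u : V) (τ : List V), (u :: τ).Chain' E → τ.length ≤ b →
      δ ≤ pathP E w (u :: τ))
    {m : ℕ} (hm : 1 ≤ m) {π : List V} (hπ : π.length = m) :
    P (Cyl π ∩ FailBM E v₀ f m) ≤ (1 - δ) * P (Cyl π) := by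
  subst hπ
  have hne : π ≠ [] := by intro h; rw [h] at hm; simp at hm
  by_cases hpos : IsPos E v₀ π
  · obtain ⟨hτne, hτch⟩ := hf π hpos
    have hiff : ∀ ρ, ρ ∈ Cyl π →
        ((IsPos E v₀ (pref ρ π.length) ∧
          pref ρ (π.length + (f (pref ρ π.length)).length) =
            pref ρ π.length ++ f (pref ρ π.length)) ↔ ρ ∈ Cyl (π ++ f π)) := by
      intro ρ h1
      have hp : pref ρ π.length = π := h1
      simp only [hp]
      rw [mem_Cyl_append]
      exact ⟨fun h => h.2, fun h => ⟨hpos, h⟩⟩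
    have hkey : Cyl π ∩ FailBM E v₀ f π.length = Cyl π \ Cyl (π ++ f π) := by
      ext ρ
      simp only [Set.mem_inter_iff, Set.mem_diff, FailBM, Set.mem_setOf_eq]
      constructor
      · rintro ⟨h1, h2⟩; exact ⟨h1, fun hc => h2 ((hiff ρ h1).2 hc)⟩
      · rintro ⟨h1, h2⟩; exact ⟨h1, fun hc => h2 ((hiff ρ h1).1 hc)⟩
    have hhead : (π ++ f π).head? = some v₀ := by
      rw [List.head?_append, hpos.1]; rfl
    have hsuf : (π.getLast hne :: f π) <:+ (π ++ f π) := by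
      refine ⟨π.dropLast, ?_⟩
      have h1 : π.dropLast ++ [π.getLast hne] = π := List.dropLast_append_getLast hne
      calc π.dropLast ++ (π.getLast hne :: f π)
          = (π.dropLast ++ [π.getLast hne]) ++ f π := by
            rw [List.append_assoc, List.singleton_append]
        _ = π ++ f π := by rw [h1]
    have hchain : (π.getLast hne :: f π).Chain' E := hτch.suffix hsuf
    have hPπ : P (Cyl π) = pathP E w π := hcylP π hpos.1
    have hPext : P (Cyl (π ++ f π)) = pathP E w π * pathP E w (π.getLast hne :: f π) := by
      rw [hcylP _ hhead, pathP_append E w π hne]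
    have hge : δ * P (Cyl π) ≤ P (Cyl (π ++ f π)) := by
      rw [hPext, hPπ, mul_comm]
      exact mul_le_mul' le_rfl (hδ _ _ hchain (hb π hpos))
    rw [hkey, measure_diff (Cyl_append_subset π (f π))
      (measurableSet_cyl _).nullMeasurableSet (measure_ne_top P _)]
    calc P (Cyl π) - P (Cyl (π ++ f π)) ≤ P (Cyl π) - δ * P (Cyl π) :=
          tsub_le_tsub_left hge _
      _ = (1 - δ) * P (Cyl π) := by
          rw [ENNReal.sub_mul fun _ _ => measure_ne_top P _, one_mul]
  · have h0 : P (Cyl π) = 0 := hnull π hne hpos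
    refine le_trans (measure_mono Set.inter_subset_left) ?_
    rw [h0]
    exact zero_le

end AuxBM3

/-- For a reasonable probability measure `P`: the set of plays consistent with a bounded
strategy of Player 0 has `P`-measure `1`; consequently, if Player 0 has a bounded winning
strategy for `(G, v₀, W)`, then `P (W) = 1`. -/
theorem stmt10 {V : Type*} [Fintype V] [MeasurableSpace V] [DiscreteMeasurableSpace V]
    (E : V → V → Prop) (hE : ∀ v, ∃ u, E v u) (v₀ : V)
    (W : Set (ℕ → V)) (hW : W ⊆ {ρ | IsPlay E v₀ ρ})
    (w : V → V → ℝ≥0) (hw : ∀ u v, E u v → 0 < w u v)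
    (P : MeasureTheory.Measure (ℕ → V)) (hP : IsReasonable E v₀ w P) :
    (∀ (f : List V → List V) (b : ℕ), IsStrategy E v₀ f → BoundedBy E v₀ b f →
      P {ρ | IsPlay E v₀ ρ ∧ ConsGen f ρ}ᶜ = 0) ∧
    ((∃ (f : List V → List V) (b : ℕ), WinningStrategy E v₀ W f ∧ BoundedBy E v₀ b f) →
      P Wᶜ = 0) := by
  classical
  obtain ⟨hprob, hcylP⟩ := hP
  haveI := hprob
  have hv1 : P (Cyl [v₀]) = 1 := by
    rw [hcylP [v₀] rfl, pathP_single]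
  have hvc : P (Cyl [v₀])ᶜ = 0 :=
    (MeasureTheory.prob_compl_eq_zero_iff (measurableSet_cyl _)).2 hv1
  have hnull : ∀ π : List V, π ≠ [] → ¬ IsPos E v₀ π → P (Cyl π) = 0 := by
    intro π hne hpos
    match π, hne with
    | h :: t, _ =>
      by_cases hh : h = v₀
      · rw [hcylP (h :: t) (by simp [hh])]
        exact pathP_eq_zero E w _ (fun hc => hpos ⟨by simp [hh], hc⟩)
      · refine measure_mono_null ?_ hvc
        intro ρ hρ
        have h1 : pref ρ 1 = [h] := (Cyl_append_subset [h] t) hρ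
        intro hmem
        have h2 : pref ρ 1 = [v₀] := hmem
        rw [h1] at h2
        exact hh (by injection h2)
  -- the minimal transition probability
  have hEdges : (Finset.univ.filter (fun p : V × V => E p.1 p.2)).Nonempty :=
    ⟨(v₀, (hE v₀).choose), by simp [(hE v₀).choose_spec]⟩
  set q : ℝ≥0∞ :=
    (Finset.univ.filter (fun p : V × V => E p.1 p.2)).inf' hEdges
      (fun p => transP E w p.1 p.2) with hqdef
  have hq_le : ∀ u v, E u v → q ≤ transP E w u v := by
    intro u v h
    exact Finset.inf'_le (f := fun p : V × V => transP E w p.1 p.2) (b := (u, v)) (by simp [h])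
  have hq_pos : 0 < q := by
    rw [hqdef, Finset.lt_inf'_iff]
    intro p hp
    exact transP_pos hw (by simpa using hp)
  have hq_one : q ≤ 1 :=
    le_trans (hq_le _ _ (hE v₀).choose_spec) (transP_le_one E w _ _)
  -- Part 1
  have main : ∀ (f : List V → List V) (b : ℕ), IsStrategy E v₀ f → BoundedBy E v₀ b f →
      P {ρ | IsPlay E v₀ ρ ∧ ConsGen f ρ}ᶜ = 0 := by
    intro f b hf hb
    set δ : ℝ≥0∞ := q ^ b with hδdef
    have hδpos : 0 < δ := ENNReal.pow_pos hq_pos b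
    have hδ : ∀ (u : V) (τ : List V), (u :: τ).Chain' E → τ.length ≤ b →
        δ ≤ pathP E w (u :: τ) := by
      intro u τ hch hlen
      exact le_trans (pow_le_pow_of_le_one zero_le hq_one hlen)
        (pathP_lower E w q hq_le u τ hch)
    set r : ℝ≥0∞ := 1 - δ with hrdef
    have hr1 : r < 1 := ENNReal.sub_lt_self ENNReal.one_ne_top one_ne_zero hδpos.ne'
    -- the key null sets
    have hBN : ∀ N : ℕ, 1 ≤ N →
        P {ρ | ρ ∈ Cyl [v₀] ∧ ∀ m, N ≤ m → ρ ∈ FailBM E v₀ f m} = 0 := by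
      intro N hN
      set nseq : ℕ → ℕ := fun j => N + j * (b + 1) with hnseq
      have hnseq_ge : ∀ j, N ≤ nseq j := fun j => Nat.le_add_right _ _
      have hnseq_one : ∀ j, 1 ≤ nseq j := fun j => le_trans hN (hnseq_ge j)
      set F : ℕ → Set (ℕ → V) :=
        fun k => Cyl [v₀] ∩ ⋂ j ∈ Finset.range k, FailBM E v₀ f (nseq j) with hFdef
      have hdet : ∀ k, DetBM (nseq k) (F k) := by
        intro k
        refine DetBM.inter ((detBM_cyl [v₀]).mono (by simpa using hnseq_one k)) ?_
        intro ρ ρ' hag hmem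
        simp only [Set.mem_iInter] at hmem ⊢
        intro j hj
        rw [Finset.mem_range] at hj
        have hle : nseq j + b ≤ nseq k := by
          have h1 : j + 1 ≤ k := hj
          have h2 : (j + 1) * (b + 1) ≤ k * (b + 1) := Nat.mul_le_mul_right _ h1
          have h3 : (j + 1) * (b + 1) = j * (b + 1) + b + 1 := by ring
          simp only [hnseq]
          omega
        exact (detBM_fail hb (nseq j)).mono hle ρ ρ' hag (hmem j (Finset.mem_range.2 hj))
      have hFk : ∀ k, P (F k) ≤ r ^ k := by
        intro k
        induction k with
        | zero =>
          rw [pow_zero]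
          exact MeasureTheory.prob_le_one
        | succ k ih =>
          have hstep : F (k + 1) = F k ∩ FailBM E v₀ f (nseq k) := by
            ext ρ
            simp only [hFdef, Set.mem_inter_iff, Set.mem_iInter, Finset.mem_range]
            constructor
            · rintro ⟨h0, h1⟩
              exact ⟨⟨h0, fun j hj => h1 j (by omega)⟩, h1 k (by omega)⟩
            · rintro ⟨⟨h0, h1⟩, h2⟩
              refine ⟨h0, fun j hj => ?_⟩
              rcases (by omega : j < k ∨ j = k) with h | h
              · exact h1 j h
              · exact h ▸ h2
          rw [hstep]
          calc P (F k ∩ FailBM E v₀ f (nseq k)) ≤ r * P (F k) :=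
                det_inter_bound P v₀ _ (hdet k) r
                  (fun π hπ => cyl_fail_bound hcylP hnull hf hb hδ (hnseq_one k) hπ)
            _ ≤ r * r ^ k := mul_le_mul' le_rfl ih
            _ = r ^ (k + 1) := by rw [pow_succ, mul_comm]
      have hsub : ∀ k, {ρ | ρ ∈ Cyl [v₀] ∧ ∀ m, N ≤ m → ρ ∈ FailBM E v₀ f m} ⊆ F k := by
        intro k ρ hρ
        refine ⟨hρ.1, ?_⟩
        simp only [Set.mem_iInter]
        intro j _
        exact hρ.2 (nseq j) (hnseq_ge j)
      have hle0 : P {ρ | ρ ∈ Cyl [v₀] ∧ ∀ m, N ≤ m → ρ ∈ FailBM E v₀ f m} ≤ 0 :=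
        ge_of_tendsto' (ENNReal.tendsto_pow_atTop_nhds_zero_of_lt_one hr1)
          (fun k => le_trans (measure_mono (hsub k)) (hFk k))
      exact le_antisymm hle0 zero_le
    -- inclusion of the bad set
    have hincl : {ρ | IsPlay E v₀ ρ ∧ ConsGen f ρ}ᶜ ⊆
        (Cyl [v₀])ᶜ ∪ ⋃ N : ℕ,
          {ρ | ρ ∈ Cyl [v₀] ∧ ∀ m, N + 1 ≤ m → ρ ∈ FailBM E v₀ f m} := by
      intro ρ hρ
      simp only [Set.mem_compl_iff, Set.mem_setOf_eq, not_and] at hρ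
      by_cases h0 : ρ 0 = v₀
      · have hcyl0 : ρ ∈ Cyl [v₀] := by
          show pref ρ 1 = [v₀]
          rw [pref_one, h0]
        by_cases hplay : ∀ n, E (ρ n) (ρ (n + 1))
        · -- a play which is not consistent
          have hnotcons := hρ ⟨h0, hplay⟩
          have hex : ∃ N, ∀ m, N ≤ m → ρ ∈ FailBM E v₀ f m := by
            by_contra hcon
            push_neg at hcon
            apply hnotcons
            apply consGen_of_inf
            intro N
            obtain ⟨m, hm1, hm2⟩ := hcon (max N 1)
            simp only [FailBM, Set.mem_setOf_eq, not_not] at hm2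
            exact ⟨m, le_trans (le_max_left _ _) hm1, le_trans (le_max_right _ _) hm1,
              hm2.2⟩
          obtain ⟨N, hN⟩ := hex
          right
          exact Set.mem_iUnion.2 ⟨N, hcyl0, fun m hm => hN m (by omega)⟩
        · -- an edge violation at some step n
          push_neg at hplay
          obtain ⟨n, hn⟩ := hplay
          right
          refine Set.mem_iUnion.2 ⟨n + 1, hcyl0, fun m hm => ?_⟩
          intro hgood
          exact not_chain_pref hn (by omega) hgood.1.2
      · left
        intro hmem
        have h2 : pref ρ 1 = [v₀] := hmem
        rw [pref_one] at h2
        exact h0 (by injection h2)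
    refine measure_mono_null hincl ?_
    refine MeasureTheory.measure_union_null hvc ?_
    exact MeasureTheory.measure_iUnion_null fun N => hBN (N + 1) (by omega)
  refine ⟨main, ?_⟩
  rintro ⟨f, b, ⟨hf, hwin⟩, hb⟩
  refine measure_mono_null ?_ (main f b hf hb)
  exact Set.compl_subset_compl.2 fun ρ hρ => hwin ρ hρ.1 hρ.2
end

section
/- Let (G,v₀,W) be a Banach–Mazur game on a finite graph and let P be a reasonable probability measure on Paths(G,v₀). If Player 0 has a move-counting winning strategy for (G,v₀,W), then for every α with 0 < α < 1, Player 0 has a winning α-strategy for (G,v₀,W). -/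
open MeasureTheory
open scoped ENNReal NNReal

open BMGame


namespace BMAux
open BMGame

variable {V : Type*}

def lastv (u : V) : List V → V
  | [] => u
  | v :: l => lastv v l

@[simp] lemma lastv_nil (u : V) : lastv u ([] : List V) = u := rfl
@[simp] lemma lastv_cons (u v : V) (l : List V) : lastv u (v :: l) = lastv v l := rfl

lemma lastv_append (u : V) (l₁ l₂ : List V) :
    lastv u (l₁ ++ l₂) = lastv (lastv u l₁) l₂ := by
  induction l₁ generalizing u with
  | nil => simp
  | cons a t ih => simp [ih]

@[simp] lemma lastv_singleton (u z : V) : lastv u [z] = z := rfl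

lemma tail_append' (l l' : List V) (h : l ≠ []) : (l ++ l').tail = l.tail ++ l' := by
  cases l with
  | nil => simp at h
  | cons a t => simp

lemma chain'_cons_append {E : V → V → Prop} (a : V) (t l : List V)
    (h1 : (a :: t).Chain' E) (h2 : (lastv a t :: l).Chain' E) :
    (a :: (t ++ l)).Chain' E := by
  induction t generalizing a with
  | nil => simpa using h2
  | cons b t' ih =>
    simp only [List.Chain'] at h1 ⊢
    rw [show b :: t' ++ l = b :: (t' ++ l) from rfl, List.isChain_cons_cons]
    rw [List.isChain_cons_cons] at h1
    exact ⟨h1.1, ih b h1.2 (by simpa using h2)⟩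

@[simp] lemma pref_length (ρ : ℕ → V) (n : ℕ) : (pref ρ n).length = n := by
  simp [pref]

@[simp] lemma pref_zero (ρ : ℕ → V) : pref ρ 0 = [] := rfl

lemma pref_succ (ρ : ℕ → V) (n : ℕ) : pref ρ (n + 1) = pref ρ n ++ [ρ n] := by
  simp [pref, List.range_succ]

lemma pref_one (ρ : ℕ → V) : pref ρ 1 = [ρ 0] := by
  simp [pref_succ]

lemma pref_ne_nil (ρ : ℕ → V) {n : ℕ} (h : 1 ≤ n) : pref ρ n ≠ [] := by
  intro hc
  have := pref_length ρ n
  rw [hc] at this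
  simp only [List.length_nil] at this
  omega


lemma pref_take (ρ : ℕ → V) {m n : ℕ} (h : m ≤ n) : (pref ρ n).take m = pref ρ m := by
  simp [pref, ← List.map_take, List.take_range, Nat.min_eq_left h]

lemma pref_head (ρ : ℕ → V) {n : ℕ} (h : 1 ≤ n) : (pref ρ n).head? = some (ρ 0) := by
  obtain ⟨m, rfl⟩ : ∃ m, n = m + 1 := ⟨n - 1, by omega⟩
  have : pref ρ (m + 1) = ρ 0 :: ((List.range m).map (fun i => ρ (i + 1))) := by
    simp [pref, List.range_succ_eq_map, List.map_map]
  rw [this]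
  rfl

lemma pref_chain' {E : V → V → Prop} {ρ : ℕ → V} (hρ : ∀ n, E (ρ n) (ρ (n + 1))) (n : ℕ) :
    (pref ρ n).Chain' E := by
  unfold pref List.Chain'
  rw [List.isChain_map]
  cases n with
  | zero => simp
  | succ m =>
    rw [List.isChain_range_succ]
    intro i _
    exact hρ i

lemma lastv_pref (ρ : ℕ → V) (n : ℕ) : lastv (ρ 0) ((pref ρ (n + 1)).tail) = ρ n := by
  cases n with
  | zero => rw [pref_one]; rfl
  | succ m =>
    rw [pref_succ ρ (m + 1), tail_append' _ _ (pref_ne_nil ρ (by omega)),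
      lastv_append, lastv_singleton]

lemma pref_split {ρ : ℕ → V} {m : ℕ} {l₁ l₂ : List V}
    (h : pref ρ (m + (l₁.length + l₂.length)) = pref ρ m ++ (l₁ ++ l₂)) :
    pref ρ (m + l₁.length) = pref ρ m ++ l₁ := by
  have h1 : (pref ρ (m + (l₁.length + l₂.length))).take (m + l₁.length)
      = pref ρ (m + l₁.length) := pref_take _ (by omega)
  rw [h] at h1
  rw [← h1, ← List.append_assoc, List.take_left' (by simp)]

variable (V) in
open Classical in
noncomputable def lists [Fintype V] : ℕ → Finset (List V)
  | 0 => {[]}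
  | n + 1 => (Finset.univ ×ˢ lists n).image fun p => p.1 :: p.2

lemma mem_lists [Fintype V] {n : ℕ} {l : List V} : l ∈ lists V n ↔ l.length = n := by
  induction n generalizing l with
  | zero => simp [lists, List.length_eq_zero_iff]
  | succ m ih =>
    simp only [lists, Finset.mem_image, Finset.mem_product]
    constructor
    · rintro ⟨⟨v, t⟩, ⟨-, ht⟩, rfl⟩
      simp [ih.mp ht]
    · intro hl
      cases l with
      | nil => simp at hl
      | cons a t =>
        exact ⟨(a, t), ⟨⟨Finset.mem_univ _, ih.mpr (by simpa using hl)⟩, rfl⟩⟩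

lemma sum_lists_succ [Fintype V] (n : ℕ) (F : List V → ℝ≥0∞) :
    ∑ l ∈ lists V (n + 1), F l = ∑ v : V, ∑ l ∈ lists V n, F (v :: l) := by
  classical
  rw [lists, Finset.sum_image, Finset.sum_product]
  intro p _ q _ hpq
  cases p; cases q
  simpa using hpq

lemma sum_lists_add [Fintype V] (m n : ℕ) (F : List V → ℝ≥0∞) :
    ∑ l ∈ lists V (m + n), F l = ∑ b ∈ lists V m, ∑ c ∈ lists V n, F (b ++ c) := by
  induction m generalizing F with
  | zero =>
    rw [Nat.zero_add, show lists V 0 = {[]} from rfl, Finset.sum_singleton]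
    simp
  | succ k ih =>
    rw [show k + 1 + n = (k + n) + 1 by omega, sum_lists_succ, sum_lists_succ]
    refine Finset.sum_congr rfl fun v _ => ?_
    rw [ih (fun l => F (v :: l))]
    simp only [List.cons_append]

def hcat (h : V → ℕ → List V) (v : V) : ℕ → List V
  | 0 => []
  | n + 1 => hcat h v n ++ h (lastv v (hcat h v n)) (n + 1)

lemma hcat_prefix (h : V → ℕ → List V) (v : V) {j ℓ : ℕ} (hj : j ≤ ℓ) :
    hcat h v j <+: hcat h v ℓ := by
  induction ℓ with
  | zero =>
    rw [Nat.le_zero.mp hj]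
  | succ m ih =>
    rcases Nat.lt_or_ge j (m + 1) with hlt | hge
    · exact (ih (by omega)).trans ⟨_, rfl⟩
    · rw [Nat.le_antisymm hj hge]

lemma hcat_chain {E : V → V → Prop} {h : V → ℕ → List V} (hh : IsCountingStrategy E h)
    (v : V) (ℓ : ℕ) : (v :: hcat h v ℓ).Chain' E := by
  induction ℓ with
  | zero => simp [hcat, List.Chain', List.isChain_singleton]
  | succ n ih =>
    exact chain'_cons_append v _ _ ih (hh _ (n + 1) (by omega)).2

def GoodP (h : V → ℕ → List V) (u : V) (ℓ B k : ℕ) (χ : List V) : Prop :=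
  ∃ s < k, ∃ σ rest : List V, σ.length = s * B ∧ χ = σ ++ (hcat h (lastv u σ) ℓ ++ rest)

lemma goodP_zero (h : V → ℕ → List V) (u : V) (ℓ B k : ℕ) {χ rest : List V} (hk : 0 < k)
    (hp : χ = hcat h u ℓ ++ rest) : GoodP h u ℓ B k χ :=
  ⟨0, hk, [], rest, by simp, by simpa using hp⟩

lemma goodP_succ (h : V → ℕ → List V) (u : V) (ℓ B k : ℕ) {χ : List V} (hlen : B ≤ χ.length)
    (hg : GoodP h (lastv u (χ.take B)) ℓ B k (χ.drop B)) : GoodP h u ℓ B (k + 1) χ := by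
  obtain ⟨s, hs, σ, rest, hσ, he⟩ := hg
  refine ⟨s + 1, by omega, χ.take B ++ σ, rest, ?_, ?_⟩
  · rw [List.length_append, List.length_take, hσ]
    rw [Nat.min_eq_left hlen]
    ring
  · rw [lastv_append, List.append_assoc, ← he, List.take_append_drop]

section Wt

open scoped Classical

variable [Fintype V] (E : V → V → Prop) (w : V → V → ℝ≥0)

lemma transP_of_edge {u v : V} (huv : E u v) :
    transP E w u v
      = (w u v : ℝ≥0∞) / ∑ x ∈ Finset.univ.filter (fun x => E u x), (w u x : ℝ≥0∞) := by
  unfold transP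
  rw [if_pos huv]

lemma transP_of_not {u v : V} (huv : ¬ E u v) : transP E w u v = 0 := by
  unfold transP
  rw [if_neg huv]

lemma denom_ne_zero (hE : ∀ v, ∃ u, E v u) (hw : ∀ u v, E u v → 0 < w u v) (u : V) :
    (∑ x ∈ Finset.univ.filter (fun x => E u x), (w u x : ℝ≥0∞)) ≠ 0 := by
  obtain ⟨v, hv⟩ := hE u
  intro h0
  rw [Finset.sum_eq_zero_iff] at h0
  have := h0 v (Finset.mem_filter.mpr ⟨Finset.mem_univ v, hv⟩)
  rw [ENNReal.coe_eq_zero] at this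
  exact (hw u v hv).ne' this

lemma denom_ne_top (u : V) :
    (∑ x ∈ Finset.univ.filter (fun x => E u x), (w u x : ℝ≥0∞)) ≠ ⊤ :=
  (ENNReal.sum_lt_top.mpr fun x _ => ENNReal.coe_lt_top).ne

lemma transP_pos (hw : ∀ u v, E u v → 0 < w u v) {u v : V} (huv : E u v) :
    0 < transP E w u v := by
  rw [transP_of_edge E w huv]
  exact ENNReal.div_pos (by simpa using (hw u v huv).ne') (denom_ne_top E w u)

lemma sum_transP (hE : ∀ v, ∃ u, E v u) (hw : ∀ u v, E u v → 0 < w u v) (u : V) :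
    ∑ v : V, transP E w u v = 1 := by
  calc ∑ v : V, transP E w u v
      = ∑ v ∈ Finset.univ.filter (fun v => E u v),
          (w u v : ℝ≥0∞) / ∑ x ∈ Finset.univ.filter (fun x => E u x), (w u x : ℝ≥0∞) := by
        rw [Finset.sum_filter]
        refine Finset.sum_congr rfl fun v _ => ?_
        by_cases hv : E u v
        · rw [transP_of_edge E w hv, if_pos hv]
        · rw [transP_of_not E w hv, if_neg hv]
    _ = 1 := by
        simp only [div_eq_mul_inv]
        rw [← Finset.sum_mul, ← div_eq_mul_inv,
          ENNReal.div_self (denom_ne_zero E w hE hw u) (denom_ne_top E w u)]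

lemma transP_le_one (u v : V) : transP E w u v ≤ 1 := by
  by_cases hv : E u v
  · rw [transP_of_edge E w hv]
    refine ENNReal.div_le_of_le_mul ?_
    rw [one_mul]
    exact Finset.single_le_sum (f := fun x => ((w u x : ℝ≥0∞)))
      (fun _ _ => zero_le) (Finset.mem_filter.mpr ⟨Finset.mem_univ v, hv⟩)
  · simp [transP_of_not E w hv]

noncomputable def wt (u : V) : List V → ℝ≥0∞
  | [] => 1
  | v :: l => transP E w u v * wt v l

@[simp] lemma wt_nil (u : V) : wt E w u [] = 1 := rfl

@[simp] lemma wt_cons (u v : V) (l : List V) :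
    wt E w u (v :: l) = transP E w u v * wt E w v l := rfl

lemma wt_append (u : V) (t l : List V) :
    wt E w u (t ++ l) = wt E w u t * wt E w (lastv u t) l := by
  induction t generalizing u with
  | nil => simp
  | cons b t' ih => simp [ih b, mul_assoc]

lemma wt_le_one (u : V) (l : List V) : wt E w u l ≤ 1 := by
  induction l generalizing u with
  | nil => simp
  | cons b t ih =>
    rw [wt_cons]
    calc transP E w u b * wt E w b t ≤ 1 * 1 :=
      mul_le_mul' (transP_le_one E w u b) (ih b)
    _ = 1 := one_mul 1

lemma wt_ne_top (u : V) (l : List V) : wt E w u l ≠ ⊤ :=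
  ((wt_le_one E w u l).trans_lt (by simp)).ne

lemma wt_pos (hw : ∀ u v, E u v → 0 < w u v) (u : V) (l : List V)
    (hc : (u :: l).Chain' E) : 0 < wt E w u l := by
  induction l generalizing u with
  | nil => simp
  | cons b t ih =>
    simp only [List.Chain'] at hc
    rw [List.isChain_cons_cons] at hc
    rw [wt_cons]
    exact ENNReal.mul_pos (transP_pos E w hw hc.1).ne' (ih b hc.2).ne'

lemma wt_zero (u : V) (l : List V) (hc : ¬ (u :: l).Chain' E) : wt E w u l = 0 := by
  induction l generalizing u with
  | nil => simp [List.Chain', List.isChain_singleton] at hc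
  | cons b t ih =>
    simp only [List.Chain'] at hc
    rw [List.isChain_cons_cons] at hc
    rw [wt_cons]
    by_cases he : E u b
    · rw [ih b (fun h => hc ⟨he, h⟩), mul_zero]
    · rw [transP_of_not E w he, zero_mul]

lemma pathP_eq_wt (a : V) (t : List V) : pathP E w (a :: t) = wt E w a t := by
  induction t generalizing a with
  | nil => simp [pathP]
  | cons b t' ih =>
    rw [wt_cons, ← ih b]
    simp [pathP]

lemma sum_wt (hE : ∀ v, ∃ u, E v u) (hw : ∀ u v, E u v → 0 < w u v) (n : ℕ) (u : V) :
    ∑ l ∈ lists V n, wt E w u l = 1 := by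
  induction n generalizing u with
  | zero => rw [show lists V 0 = {[]} from rfl, Finset.sum_singleton, wt_nil]
  | succ m ih =>
    rw [sum_lists_succ]
    calc ∑ v : V, ∑ l ∈ lists V m, wt E w u (v :: l)
        = ∑ v : V, transP E w u v * ∑ l ∈ lists V m, wt E w v l := by
          refine Finset.sum_congr rfl fun v _ => ?_
          rw [Finset.mul_sum]
          exact Finset.sum_congr rfl fun l _ => wt_cons E w u v l
      _ = 1 := by
          simp only [ih, mul_one]
          exact sum_transP E w hE hw u

end Wt

section Bad

open scoped Classical

variable [Fintype V] (E : V → V → Prop) (w : V → V → ℝ≥0)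

lemma sum_wt_prefix (hE : ∀ v, ∃ u, E v u) (hw : ∀ u v, E u v → 0 < w u v) (u : V) (pat : List V) {n : ℕ} (hn : pat.length ≤ n) :
    ∑ l ∈ lists V n, (if pat <+: l then wt E w u l else 0) = wt E w u pat := by
  classical
  obtain ⟨m, rfl⟩ : ∃ m, n = pat.length + m := ⟨n - pat.length, by omega⟩
  rw [sum_lists_add]
  have key : ∀ b ∈ lists V pat.length,
      (∑ c ∈ lists V m, if pat <+: b ++ c then wt E w u (b ++ c) else 0)
        = if b = pat then wt E w u pat else 0 := by
    intro b hb
    rw [mem_lists] at hb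
    by_cases hbp : b = pat
    · subst hbp
      rw [if_pos rfl]
      calc (∑ c ∈ lists V m, if b <+: b ++ c then wt E w u (b ++ c) else 0)
          = ∑ c ∈ lists V m, wt E w u b * wt E w (lastv u b) c := by
            refine Finset.sum_congr rfl fun c _ => ?_
            rw [if_pos (List.prefix_append b c), wt_append]
        _ = wt E w u b := by
            rw [← Finset.mul_sum, sum_wt E w hE hw, mul_one]
    · rw [if_neg hbp]
      refine Finset.sum_eq_zero fun c _ => ?_
      rw [if_neg]
      intro hp
      have h1 : pat <+: b := List.prefix_of_prefix_length_le hp (List.prefix_append b c)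
        (by omega)
      exact hbp (h1.eq_of_length (by omega)).symm
  rw [Finset.sum_congr rfl key, Finset.sum_ite_eq' (lists V pat.length) pat
    (fun _ => wt E w u pat), if_pos (mem_lists.mpr rfl)]

lemma badSum (hE : ∀ v, ∃ u, E v u) (hw : ∀ u v, E u v → 0 < w u v) (h : V → ℕ → List V) (ℓ B : ℕ) (δ : ℝ≥0∞)
    (hB : ∀ v, (hcat h v ℓ).length ≤ B) (hδ : ∀ v, δ ≤ wt E w v (hcat h v ℓ)) :
    ∀ k u, (∑ χ ∈ lists V (k * B), if ¬ GoodP h u ℓ B k χ then wt E w u χ else 0)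
      ≤ (1 - δ) ^ k := by
  classical
  intro k
  induction k with
  | zero =>
    intro u
    rw [Nat.zero_mul, show lists V 0 = {[]} from rfl, Finset.sum_singleton, pow_zero]
    split_ifs <;> simp
  | succ k ih =>
    intro u
    rw [show (k + 1) * B = B + k * B by ring, sum_lists_add]
    have hle1 : ∀ b ∈ lists V B,
        (∑ c ∈ lists V (k * B), if ¬ GoodP h u ℓ B (k + 1) (b ++ c)
            then wt E w u (b ++ c) else 0)
          ≤ (if ¬ (hcat h u ℓ <+: b) then wt E w u b else 0) * (1 - δ) ^ k := by
      intro b hb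
      rw [mem_lists] at hb
      by_cases hpre : hcat h u ℓ <+: b
      · have hz : ∀ c ∈ lists V (k * B),
            (if ¬ GoodP h u ℓ B (k + 1) (b ++ c) then wt E w u (b ++ c) else 0) = 0 := by
          intro c _
          rw [if_neg]
          intro hng
          apply hng
          obtain ⟨t, ht⟩ := hpre
          exact goodP_zero h u ℓ B (k + 1) (by omega)
            (by rw [← ht, List.append_assoc])
        rw [Finset.sum_congr rfl hz]
        simp [hpre]
      · calc (∑ c ∈ lists V (k * B), if ¬ GoodP h u ℓ B (k + 1) (b ++ c)
              then wt E w u (b ++ c) else 0)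
            ≤ ∑ c ∈ lists V (k * B), wt E w u b *
                (if ¬ GoodP h (lastv u b) ℓ B k c then wt E w (lastv u b) c else 0) := by
              refine Finset.sum_le_sum fun c hc => ?_
              by_cases hg : GoodP h u ℓ B (k + 1) (b ++ c)
              · rw [if_neg (by simpa using hg)]
                exact zero_le
              · have hngc : ¬ GoodP h (lastv u b) ℓ B k c := by
                  intro hgc
                  apply hg
                  apply goodP_succ h u ℓ B k (by simp [hb])
                  rw [List.take_left' hb, List.drop_left' hb]
                  exact hgc
                rw [if_pos hg, if_pos hngc, wt_append]
          _ = wt E w u b * ∑ c ∈ lists V (k * B),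
                (if ¬ GoodP h (lastv u b) ℓ B k c then wt E w (lastv u b) c else 0) := by
              rw [Finset.mul_sum]
          _ ≤ wt E w u b * (1 - δ) ^ k := mul_le_mul_right (ih (lastv u b)) _
          _ = (if ¬ (hcat h u ℓ <+: b) then wt E w u b else 0) * (1 - δ) ^ k := by
              rw [if_pos hpre]
    calc (∑ b ∈ lists V B, ∑ c ∈ lists V (k * B),
            if ¬ GoodP h u ℓ B (k + 1) (b ++ c) then wt E w u (b ++ c) else 0)
        ≤ ∑ b ∈ lists V B, (if ¬ (hcat h u ℓ <+: b) then wt E w u b else 0) * (1 - δ) ^ k :=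
          Finset.sum_le_sum hle1
      _ = (∑ b ∈ lists V B, if ¬ (hcat h u ℓ <+: b) then wt E w u b else 0) * (1 - δ) ^ k := by
          rw [Finset.sum_mul]
      _ ≤ (1 - δ) * (1 - δ) ^ k := by
          refine mul_le_mul_left ?_ _
          have h1 : (∑ b ∈ lists V B, if ¬ (hcat h u ℓ <+: b) then wt E w u b else 0)
              + (∑ b ∈ lists V B, if (hcat h u ℓ <+: b) then wt E w u b else 0) = 1 := by
            rw [← Finset.sum_add_distrib]
            calc (∑ b ∈ lists V B, ((if ¬ (hcat h u ℓ <+: b) then wt E w u b else 0)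
                    + if (hcat h u ℓ <+: b) then wt E w u b else 0))
                = ∑ b ∈ lists V B, wt E w u b := by
                  refine Finset.sum_congr rfl fun b _ => ?_
                  by_cases hbp : hcat h u ℓ <+: b
                  · rw [if_neg (by simpa using hbp), if_pos hbp, zero_add]
                  · rw [if_pos hbp, if_neg hbp, add_zero]
              _ = 1 := sum_wt E w hE hw B u
          rw [sum_wt_prefix E w hE hw u _ (hB u)] at h1
          have hδtop : δ ≠ ⊤ :=
            (((hδ u).trans (wt_le_one E w u _)).trans_lt (by simp)).ne
          refine ENNReal.le_sub_of_add_le_right hδtop ?_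
          calc (∑ b ∈ lists V B, if ¬ (hcat h u ℓ <+: b) then wt E w u b else 0) + δ
              ≤ (∑ b ∈ lists V B, if ¬ (hcat h u ℓ <+: b) then wt E w u b else 0)
                + wt E w u (hcat h u ℓ) := add_le_add_right (hδ u) _
            _ = 1 := h1
      _ = (1 - δ) ^ (k + 1) := (pow_succ' (1 - δ) k).symm

end Bad

section Cyl

lemma mem_Cyl {ρ : ℕ → V} {l : List V} : ρ ∈ Cyl l ↔ pref ρ l.length = l := Iff.rfl

lemma pref_getElem (ρ : ℕ → V) {n i : ℕ} (hi : i < n) :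
    (pref ρ n)[i]'(by simpa using hi) = ρ i := by
  simp [pref]

lemma Cyl_eq_iInter (d : V) (l : List V) :
    (Cyl l : Set (ℕ → V))
      = ⋂ i ∈ Finset.range l.length, (fun ρ : ℕ → V => ρ i) ⁻¹' {l.getD i d} := by
  ext ρ
  simp only [Set.mem_iInter, Set.mem_preimage, Set.mem_singleton_iff, Finset.mem_range, mem_Cyl]
  constructor
  · intro hρ i hi
    rw [← hρ, List.getD_eq_getElem _ _ (by simpa using hi), pref_getElem ρ hi]
  · intro hi
    apply List.ext_getElem (by simp)
    intro i h1 h2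
    rw [pref_getElem ρ (by simpa using h1), ← List.getD_eq_getElem _ d h2]
    exact hi i (by simpa using h1)

lemma measurableSet_Cyl [MeasurableSpace V] [DiscreteMeasurableSpace V] (d : V) (l : List V) :
    MeasurableSet (Cyl l : Set (ℕ → V)) := by
  rw [Cyl_eq_iInter d l]
  exact MeasurableSet.biInter (Finset.range _).countable_toSet fun i _ =>
    (measurable_pi_apply i) (MeasurableSet.of_discrete)

lemma Cyl_disjoint {l₁ l₂ : List V} (hlen : l₁.length = l₂.length) (hne : l₁ ≠ l₂) :
    Disjoint (Cyl l₁ : Set (ℕ → V)) (Cyl l₂) := by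
  rw [Set.disjoint_left]
  intro ρ h1 h2
  rw [mem_Cyl] at h1 h2
  rw [hlen] at h1
  exact hne (h1.symm.trans h2)

end Cyl

section Prop6

open scoped Classical

variable [Fintype V] (E : V → V → Prop) (w : V → V → ℝ≥0)

noncomputable def prp (h : V → ℕ → List V) (u : V) (ℓ B k : ℕ) : Finset (List V) :=
  (lists V (k * B)).filter (fun χ => GoodP h u ℓ B k χ ∧ (u :: χ).Chain' E)

lemma sum_wt_prp (hE : ∀ v, ∃ u, E v u) (hw : ∀ u v, E u v → 0 < w u v)
    (h : V → ℕ → List V) (u : V) (ℓ B k : ℕ) (δ e : ℝ≥0∞)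
    (hB : ∀ v, (hcat h v ℓ).length ≤ B) (hδ : ∀ v, δ ≤ wt E w v (hcat h v ℓ))
    (hk : (1 - δ) ^ k ≤ e) :
    1 ≤ e + ∑ χ ∈ prp E h u ℓ B k, wt E w u χ := by
  have h1 : ∑ χ ∈ prp E h u ℓ B k, wt E w u χ
      = ∑ χ ∈ lists V (k * B), (if GoodP h u ℓ B k χ then wt E w u χ else 0) := by
    rw [prp, Finset.sum_filter]
    refine Finset.sum_congr rfl fun χ _ => ?_
    by_cases hg : GoodP h u ℓ B k χ
    · by_cases hch : (u :: χ).Chain' E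
      · rw [if_pos ⟨hg, hch⟩, if_pos hg]
      · rw [if_neg (fun hc => hch hc.2), if_pos hg, wt_zero E w u χ hch]
    · rw [if_neg (fun hc => hg hc.1), if_neg hg]
  have h2 : (∑ χ ∈ lists V (k * B), (if GoodP h u ℓ B k χ then wt E w u χ else 0))
      + (∑ χ ∈ lists V (k * B), (if ¬ GoodP h u ℓ B k χ then wt E w u χ else 0)) = 1 := by
    rw [← Finset.sum_add_distrib]
    calc (∑ χ ∈ lists V (k * B), ((if GoodP h u ℓ B k χ then wt E w u χ else 0)
            + if ¬ GoodP h u ℓ B k χ then wt E w u χ else 0))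
        = ∑ χ ∈ lists V (k * B), wt E w u χ := by
          refine Finset.sum_congr rfl fun χ _ => ?_
          by_cases hg : GoodP h u ℓ B k χ
          · rw [if_pos hg, if_neg (by simpa using hg), add_zero]
          · rw [if_neg hg, if_pos hg, zero_add]
      _ = 1 := sum_wt E w hE hw _ u
  calc (1 : ℝ≥0∞) = (∑ χ ∈ lists V (k * B), (if GoodP h u ℓ B k χ then wt E w u χ else 0))
        + (∑ χ ∈ lists V (k * B), (if ¬ GoodP h u ℓ B k χ then wt E w u χ else 0)) := h2.symm
    _ ≤ (∑ χ ∈ lists V (k * B), (if GoodP h u ℓ B k χ then wt E w u χ else 0)) + e :=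
        add_le_add_right ((badSum E w hE hw h ℓ B δ hB hδ k u).trans hk) _
    _ = e + ∑ χ ∈ prp E h u ℓ B k, wt E w u χ := by rw [h1, add_comm]

lemma legal_main [MeasurableSpace V] [DiscreteMeasurableSpace V]
    (hE : ∀ v, ∃ u, E v u) (hw : ∀ u v, E u v → 0 < w u v)
    (v₀ : V) (P : Measure (ℕ → V)) (hP : IsReasonable E v₀ w P)
    (α : ℝ) (hα0 : 0 < α)
    (h : V → ℕ → List V) (B k : ℕ) (hk1 : 1 ≤ k) (hB1 : 1 ≤ B)
    (π : List V) (hπ : IsPos E v₀ π)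
    (hsum : ENNReal.ofReal α
      ≤ ∑ χ ∈ prp E h (lastv v₀ π.tail) π.length B k, wt E w (lastv v₀ π.tail) χ) :
    LegalProposal E P α π (prp E h (lastv v₀ π.tail) π.length B k) := by
  obtain ⟨t, hπt⟩ : ∃ t, π = v₀ :: t := by
    cases π with
    | nil => simp [IsPos] at hπ
    | cons a t =>
      obtain ⟨h1, -⟩ := hπ
      rw [List.head?_cons, Option.some_inj] at h1
      exact ⟨t, by rw [h1]⟩
  have htail : π.tail = t := by rw [hπt]; rfl
  set u := lastv v₀ π.tail with hu
  have hch : π.Chain' E := hπ.2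
  -- basic membership facts
  have hmem : ∀ τ ∈ prp E h u π.length B k, τ.length = k * B ∧ GoodP h u π.length B k τ
      ∧ (u :: τ).Chain' E := by
    intro τ hτ
    rw [prp, Finset.mem_filter] at hτ
    exact ⟨mem_lists.mp hτ.1, hτ.2.1, hτ.2.2⟩
  have hne : ∀ τ ∈ prp E h u π.length B k, τ ≠ [] := by
    intro τ hτ h0
    have := (hmem τ hτ).1
    rw [h0] at this
    simp only [List.length_nil] at this
    have : 1 ≤ k * B := Nat.one_le_iff_ne_zero.mpr (by positivity)
    omega
  have hchain : ∀ τ ∈ prp E h u π.length B k, (π ++ τ).Chain' E := by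
    intro τ hτ
    rw [hπt]
    exact chain'_cons_append v₀ t τ (hπt ▸ hch) (by rw [← htail, ← hu]; exact (hmem τ hτ).2.2)
  -- nonemptiness
  have hnonempty : (prp E h u π.length B k).Nonempty := by
    rw [Finset.nonempty_iff_ne_empty]
    intro hemp
    rw [hemp, Finset.sum_empty] at hsum
    exact absurd (le_antisymm hsum zero_le) (ENNReal.ofReal_pos.mpr hα0).ne'
  refine ⟨hnonempty, fun τ hτ => ⟨hne τ hτ, hchain τ hτ⟩, ?_⟩
  -- measure computation
  have hPCyl : ∀ τ ∈ prp E h u π.length B k, P (Cyl (π ++ τ)) = pathP E w (π ++ τ) := by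
    intro τ hτ
    refine hP.2 _ ?_
    rw [hπt, List.cons_append, List.head?_cons]
  have hdisj : (↑(prp E h u π.length B k) : Set (List V)).PairwiseDisjoint
      (fun τ => (Cyl (π ++ τ) : Set (ℕ → V))) := by
    intro τ1 h1 τ2 h2 h12
    refine Cyl_disjoint (by simp [(hmem τ1 (by exact h1)).1, (hmem τ2 (by exact h2)).1]) ?_
    intro hcontra
    exact h12 (List.append_cancel_left hcontra)
  have hunion : P (⋃ τ ∈ prp E h u π.length B k, Cyl (π ++ τ))
      = ∑ τ ∈ prp E h u π.length B k, P (Cyl (π ++ τ)) :=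
    measure_biUnion_finset hdisj fun τ _ => measurableSet_Cyl v₀ _
  have hPpi : P (Cyl π) = wt E w v₀ t := by
    rw [hP.2 π hπ.1, hπt, pathP_eq_wt]
  have hwt0 : wt E w v₀ t ≠ 0 := by
    refine (wt_pos E w hw v₀ t ?_).ne'
    rw [← hπt]; exact hch
  have hwtt : wt E w v₀ t ≠ ⊤ := wt_ne_top E w v₀ t
  have hsum2 : ∑ τ ∈ prp E h u π.length B k, P (Cyl (π ++ τ))
      = wt E w v₀ t * ∑ τ ∈ prp E h u π.length B k, wt E w u τ := by
    rw [Finset.mul_sum]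
    refine Finset.sum_congr rfl fun τ hτ => ?_
    rw [hPCyl τ hτ, hπt, List.cons_append, pathP_eq_wt, wt_append, hu, htail]
  rw [hunion, hsum2, hPpi, mul_div_assoc, ENNReal.mul_div_cancel hwt0 hwtt]
  exact hsum

end Prop6

section Winning

lemma pref_split_pair {ρ : ℕ → V} {m : ℕ} {l₁ l₂ : List V}
    (hp : pref ρ (m + (l₁.length + l₂.length)) = pref ρ m ++ (l₁ ++ l₂)) :
    pref ρ (m + l₁.length) = pref ρ m ++ l₁ ∧
      pref ρ (m + l₁.length + l₂.length) = pref ρ (m + l₁.length) ++ l₂ := by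
  have h1 := pref_split hp
  refine ⟨h1, ?_⟩
  rw [h1, List.append_assoc, ← hp, add_assoc]

lemma consMove_of_consAlpha {E : V → V → Prop} {v₀ : V} {h : V → ℕ → List V}
    {f : List V → Finset (List V)}
    (hf : ∀ π τ, τ ∈ f π → ∃ σ rest : List V,
        τ = σ ++ (hcat h (lastv (lastv v₀ π.tail) σ) π.length ++ rest))
    {ρ : ℕ → V} (hρ : IsPlay E v₀ ρ) (hca : ConsAlpha f ρ) :
    ConsMoveCounting h ρ := by
  obtain ⟨c, hc0, hc⟩ := hca
  have hmono : ∀ i, c i < c (i + 1) := by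
    intro i
    obtain ⟨τ, -, -, hlt⟩ := hc i
    omega
  have hlb : ∀ i, i + 1 ≤ c i := by
    intro i
    induction i with
    | zero => exact hc0
    | succ j ih => have := hmono j; omega
  have key : ∀ i, ∃ d : ℕ, c i ≤ d ∧
      d + (h (ρ (d - 1)) (i + 1)).length < c (i + 1) ∧
      pref ρ (d + (h (ρ (d - 1)) (i + 1)).length) = pref ρ d ++ h (ρ (d - 1)) (i + 1) := by
    intro i
    obtain ⟨τ, hτf, hτp, hτlt⟩ := hc i
    obtain ⟨σ, rest, hτeq⟩ := hf _ τ hτf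
    rw [pref_length] at hτeq
    set m := c i with hm
    set u := lastv v₀ (pref ρ m).tail with hu
    set x := lastv u σ with hx
    have hm1 : 1 ≤ m := by have := hlb i; omega
    -- split the prefix equation
    have hτp' : pref ρ (m + (σ.length + (hcat h x m ++ rest).length))
        = pref ρ m ++ (σ ++ (hcat h x m ++ rest)) := by
      rw [← List.length_append, ← hτeq]
      exact hτp
    obtain ⟨A1, A2⟩ := pref_split_pair hτp'
    obtain ⟨Δ, hΔ⟩ := hcat_prefix h x (show i + 1 ≤ m from hlb i)
    set e := lastv x (hcat h x i) with he
    have hsucc : hcat h x (i + 1) = hcat h x i ++ h e (i + 1) := rfl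
    have hdec : hcat h x m ++ rest = hcat h x i ++ (h e (i + 1) ++ (Δ ++ rest)) := by
      rw [← hΔ, hsucc]
      simp [List.append_assoc]
    have A2' : pref ρ (m + σ.length + ((hcat h x i).length + (h e (i + 1) ++ (Δ ++ rest)).length))
        = pref ρ (m + σ.length) ++ (hcat h x i ++ (h e (i + 1) ++ (Δ ++ rest))) := by
      rw [← List.length_append, ← hdec]
      exact A2
    obtain ⟨B1, B2⟩ := pref_split_pair A2'
    set d := m + σ.length + (hcat h x i).length with hd
    have B2' : pref ρ (d + ((h e (i + 1)).length + (Δ ++ rest).length))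
        = pref ρ d ++ (h e (i + 1) ++ (Δ ++ rest)) := by
      rw [← List.length_append]
      exact B2
    obtain ⟨C1, C2⟩ := pref_split_pair B2'
    -- the vertex before the block
    have hρd : ρ (d - 1) = e := by
      have h1 := lastv_pref ρ (d - 1)
      rw [show d - 1 + 1 = d from by omega] at h1
      rw [B1, A1, List.append_assoc, tail_append' _ _ (pref_ne_nil ρ hm1), hρ.1,
        lastv_append, lastv_append] at h1
      exact h1.symm
    -- length bookkeeping
    have len2 : (hcat h x (i + 1)).length + Δ.length = (hcat h x m).length := by
      rw [← hΔ, List.length_append]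
    have len1 : (hcat h x (i + 1)).length = (hcat h x i).length + (h e (i + 1)).length := by
      rw [hsucc, List.length_append]
    have len3 : τ.length = σ.length + ((hcat h x m).length + rest.length) := by
      rw [hτeq]
      simp
    have len4 : (h (ρ (d - 1)) (i + 1)).length = (h e (i + 1)).length := by rw [hρd]
    refine ⟨d, by omega, by omega, ?_⟩
    rw [hρd]
    exact C1
  choose d hd using key
  refine ⟨d, le_trans hc0 (hd 0).1, fun i => ⟨(hd i).2.2, ?_⟩⟩
  exact lt_of_lt_of_le (hd i).2.1 (hd (i + 1)).1

end Winning

end BMAux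


/-- If Player 0 has a move-counting winning strategy for `(G, v₀, W)`, then for every
`0 < α < 1` Player 0 has a winning α-strategy. -/
theorem stmt11 {V : Type*} [Fintype V] [MeasurableSpace V] [DiscreteMeasurableSpace V]
    (E : V → V → Prop) (hE : ∀ v, ∃ u, E v u) (v₀ : V)
    (W : Set (ℕ → V)) (hW : W ⊆ {ρ | IsPlay E v₀ ρ})
    (w : V → V → ℝ≥0) (hw : ∀ u v, E u v → 0 < w u v)
    (P : MeasureTheory.Measure (ℕ → V)) (hP : IsReasonable E v₀ w P)
    (hmc : ∃ h : V → ℕ → List V, MoveCountingWinning E v₀ W h) :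
    ∀ α : ℝ, 0 < α → α < 1 →
      ∃ f : List V → Finset (List V), AlphaWinning E v₀ P α W f := by
  classical
  intro α hα0 hα1
  obtain ⟨h, hhc, hhw⟩ := hmc
  haveI : Nonempty V := ⟨v₀⟩
  set Bf : ℕ → ℕ := fun ℓ => 1 + Finset.univ.sup (fun v => (BMAux.hcat h v ℓ).length) with hBf
  have hBf1 : ∀ ℓ, 1 ≤ Bf ℓ := fun ℓ => Nat.le_add_right 1 _
  have hBfle : ∀ ℓ v, (BMAux.hcat h v ℓ).length ≤ Bf ℓ := by
    intro ℓ v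
    have h1 : (BMAux.hcat h v ℓ).length ≤ Finset.univ.sup (fun x => (BMAux.hcat h x ℓ).length) :=
      Finset.le_sup (f := fun x => (BMAux.hcat h x ℓ).length) (Finset.mem_univ v)
    simp only [hBf]
    omega
  set δf : ℕ → ℝ≥0∞ := fun ℓ => Finset.univ.inf' Finset.univ_nonempty
      (fun v => BMAux.wt E w v (BMAux.hcat h v ℓ)) with hδf
  have hδle : ∀ ℓ v, δf ℓ ≤ BMAux.wt E w v (BMAux.hcat h v ℓ) := fun ℓ v =>
    Finset.inf'_le _ (Finset.mem_univ v)
  have hδpos : ∀ ℓ, 0 < δf ℓ := by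
    intro ℓ
    rw [hδf]
    rw [Finset.lt_inf'_iff]
    intro v _
    exact BMAux.wt_pos E w hw v _ (BMAux.hcat_chain hhc v ℓ)
  have hKex : ∀ ℓ, ∃ k : ℕ, 1 ≤ k ∧ (1 - δf ℓ) ^ k ≤ ENNReal.ofReal (1 - α) := by
    intro ℓ
    have hlt1 : (1 : ℝ≥0∞) - δf ℓ < 1 :=
      ENNReal.sub_lt_self (by simp) (by simp) (hδpos ℓ).ne'
    have hεpos : 0 < ENNReal.ofReal (1 - α) := ENNReal.ofReal_pos.mpr (by linarith)
    obtain ⟨n, hn⟩ :=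
      ((ENNReal.tendsto_pow_atTop_nhds_zero_of_lt_one hlt1).eventually_lt_const hεpos).exists
    refine ⟨max n 1, le_max_right n 1, le_trans ?_ hn.le⟩
    exact pow_le_pow_of_le_one zero_le hlt1.le (le_max_left n 1)
  choose K hK1 hK2 using hKex
  set f : List V → Finset (List V) := fun π =>
    BMAux.prp E h (BMAux.lastv v₀ π.tail) π.length (Bf π.length) (K π.length) with hfdef
  have hsum : ∀ π : List V, ENNReal.ofReal α
      ≤ ∑ χ ∈ f π, BMAux.wt E w (BMAux.lastv v₀ π.tail) χ := by
    intro π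
    have h1 : (1 : ℝ≥0∞) ≤ ENNReal.ofReal (1 - α)
        + ∑ χ ∈ f π, BMAux.wt E w (BMAux.lastv v₀ π.tail) χ :=
      BMAux.sum_wt_prp E w hE hw h (BMAux.lastv v₀ π.tail) π.length (Bf π.length)
        (K π.length) (δf π.length) _ (hBfle π.length) (hδle π.length) (hK2 π.length)
    have h2 : ENNReal.ofReal α + ENNReal.ofReal (1 - α) = 1 := by
      rw [← ENNReal.ofReal_add hα0.le (by linarith), ← ENNReal.ofReal_one]
      norm_num
    have h3 : ENNReal.ofReal (1 - α) + ENNReal.ofReal α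
        ≤ ENNReal.ofReal (1 - α) + ∑ χ ∈ f π, BMAux.wt E w (BMAux.lastv v₀ π.tail) χ := by
      rw [add_comm (ENNReal.ofReal (1 - α)) (ENNReal.ofReal α), h2]
      exact h1
    exact (ENNReal.add_le_add_iff_left ENNReal.ofReal_ne_top).mp h3
  refine ⟨f, ?_, ?_⟩
  · intro π hπ
    exact BMAux.legal_main E w hE hw v₀ P hP α hα0 h (Bf π.length) (K π.length)
      (hK1 π.length) (hBf1 π.length) π hπ (hsum π)
  · intro ρ hρ hcons
    apply hhw ρ hρ
    refine BMAux.consMove_of_consAlpha (f := f) ?_ hρ hcons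
    intro π τ hτ
    rw [hfdef] at hτ
    unfold BMAux.prp at hτ
    rw [Finset.mem_filter] at hτ
    obtain ⟨-, ⟨s, -, σ, rest, -, hτeq⟩, -⟩ := hτ
    exact ⟨σ, rest, hτeq⟩
end

section
/- Let (G,v₀,W) be a Banach–Mazur game on a finite graph and let P be a reasonable probability measure on Paths(G,v₀). If Player 0 has a winning α-strategy for (G,v₀,W) for some α > 0, then P(W) = 1. -/
open MeasureTheory
open scoped ENNReal NNReal

set_option linter.unusedSectionVars false

namespace BMGame
variable {V : Type*}

@[simp] lemma pref_length (ρ : ℕ → V) (n : ℕ) : (pref ρ n).length = n := by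
  simp [pref]

@[simp] lemma pref_getElem (ρ : ℕ → V) {n i : ℕ} (h : i < (pref ρ n).length) :
    (pref ρ n)[i] = ρ i := by
  simp [pref]

lemma pref_take (ρ : ℕ → V) {k n : ℕ} (h : k ≤ n) : (pref ρ n).take k = pref ρ k := by
  simp [pref, ← List.map_take, List.take_range, Nat.min_eq_left h]

lemma pref_add (ρ : ℕ → V) (n m : ℕ) :
    pref ρ (n + m) = pref ρ n ++ List.ofFn (fun i : Fin m => ρ (n + i)) := by
  apply List.ext_getElem (by simp)
  intro i h1 h2
  rcases lt_or_ge i n with h | h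
  · rw [List.getElem_append_left (by simpa using h)]
    simp [h, Nat.lt_of_lt_of_le h (Nat.le_add_right n m)]
  · rw [List.getElem_append_right (by simpa using h)]
    rw [pref_getElem ρ h1]
    simp only [List.getElem_ofFn, pref_length]
    exact congrArg ρ (by omega)

lemma mem_Cyl {π : List V} {ρ : ℕ → V} : ρ ∈ Cyl π ↔ pref ρ π.length = π := Iff.rfl

lemma measurableSet_Cyl [MeasurableSpace V] [DiscreteMeasurableSpace V] (π : List V) :
    MeasurableSet (Cyl π) := by
  have : Cyl π = ⋂ i : Fin π.length, (fun ρ : ℕ → V => ρ i) ⁻¹' {π[i]} := by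
    ext ρ
    simp only [Set.mem_iInter, Set.mem_preimage, Set.mem_singleton_iff, mem_Cyl]
    constructor
    · intro h i
      exact ((List.getElem_of_eq h.symm i.2).trans (pref_getElem ρ (by simp [i.2]))).symm
    · intro h; apply List.ext_getElem (by simp)
      intro i h1 h2
      rw [pref_getElem ρ h1]
      exact h ⟨i, h2⟩
  rw [this]
  exact MeasurableSet.iInter fun i => (measurable_pi_apply _) (measurableSet_singleton _)

lemma Cyl_disjoint {π π' : List V} (hl : π.length = π'.length) (hne : π ≠ π') :
    Disjoint (Cyl π) (Cyl π') := by
  rw [Set.disjoint_left]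
  intro ρ h h'
  exact hne (h.symm.trans (by rw [hl]; exact h'))

lemma mem_Cyl_append {π : List V} {m : ℕ} {x : Fin m → V} {ρ : ℕ → V} :
    ρ ∈ Cyl (π ++ List.ofFn x) ↔ ρ ∈ Cyl π ∧ ∀ i : Fin m, ρ (π.length + i) = x i := by
  constructor
  · intro h
    rw [mem_Cyl, List.length_append, List.length_ofFn, pref_add] at h
    obtain ⟨h1, h2⟩ := List.append_inj h (by simp)
    refine ⟨h1, fun i => ?_⟩
    have := List.ofFn_inj.mp h2
    exact congrFun this i
  · rintro ⟨h1, h2⟩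
    rw [mem_Cyl, List.length_append, List.length_ofFn, pref_add, h1]
    congr 1
    exact List.ofFn_inj.mpr (funext fun i => h2 i)

lemma Cyl_eq_iUnion (π : List V) (m : ℕ) :
    Cyl π = ⋃ x : Fin m → V, Cyl (π ++ List.ofFn x) := by
  ext ρ
  simp only [Set.mem_iUnion, mem_Cyl_append]
  constructor
  · intro h; exact ⟨fun i => ρ (π.length + i), h, fun i => rfl⟩
  · rintro ⟨x, h, -⟩; exact h

lemma Cyl_append_subset (π τ : List V) : Cyl (π ++ τ) ⊆ Cyl π := by
  intro ρ h
  rw [mem_Cyl, List.length_append] at h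
  rw [mem_Cyl, ← pref_take ρ (Nat.le_add_right π.length τ.length), h,
    List.take_append_of_le_length le_rfl, List.take_length]

lemma Cyl_mono {β γ : List V} (h : β <+: γ) : Cyl γ ⊆ Cyl β := by
  intro ρ hρ
  rw [mem_Cyl, ← pref_take ρ h.length_le, hρ, ← List.prefix_iff_eq_take.mp h]

lemma prefix_of_mem_both {π τ : List V} {m : ℕ} {x : Fin m → V} (hτ : τ.length ≤ m)
    {ρ : ℕ → V} (h1 : ρ ∈ Cyl (π ++ List.ofFn x)) (h2 : ρ ∈ Cyl (π ++ τ)) :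
    τ <+: List.ofFn x := by
  rw [mem_Cyl, List.length_append, List.length_ofFn] at h1
  rw [mem_Cyl, List.length_append] at h2
  have key : pref ρ (π.length + τ.length) = π ++ (List.ofFn x).take τ.length := by
    rw [← pref_take ρ (by omega : π.length + τ.length ≤ π.length + m), h1,
      List.take_append, List.take_of_length_le (by omega), Nat.add_sub_cancel_left]
  rw [h2] at key
  rw [List.prefix_iff_eq_take]
  exact List.append_cancel_left key

section Meas

variable [Fintype V] [MeasurableSpace V] [DiscreteMeasurableSpace V]
variable {E : V → V → Prop} {v₀ : V} {w : V → V → ℝ≥0} {P : Measure (ℕ → V)}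

@[simp] lemma Cyl_nil : Cyl ([] : List V) = Set.univ := by
  ext ρ; simp [Cyl, pref]

lemma measure_Cyl_eq_sum (P : Measure (ℕ → V)) (π : List V) (m : ℕ) :
    P (Cyl π) = ∑ x : Fin m → V, P (Cyl (π ++ List.ofFn x)) := by
  rw [Cyl_eq_iUnion π m, measure_iUnion ?_ (fun x => measurableSet_Cyl _), tsum_fintype]
  intro x y hxy
  exact Cyl_disjoint (by simp) (fun h => hxy (List.ofFn_inj.mp (List.append_cancel_left h)))

lemma transP_sum_eq_one (hE : ∀ v, ∃ u, E v u) (hw : ∀ u v, E u v → 0 < w u v) (u : V) :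
    ∑ v : V, transP E w u v = 1 := by
  classical
  set S : ℝ≥0∞ := ∑ x ∈ Finset.univ.filter (fun x => E u x), (w u x : ℝ≥0∞) with hS
  have hS0 : S ≠ 0 := by
    obtain ⟨x, hx⟩ := hE u
    intro h
    rw [hS, Finset.sum_eq_zero_iff] at h
    have := h x (by simp [hx])
    simp [(hw u x hx).ne'] at this
  have hStop : S ≠ ⊤ := by
    rw [hS]
    exact (ENNReal.sum_lt_top.mpr fun x _ => ENNReal.coe_lt_top).ne
  have step : ∀ v : V, transP E w u v = if E u v then (w u v : ℝ≥0∞) * S⁻¹ else 0 := by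
    intro v
    simp only [transP, hS, ENNReal.div_eq_inv_mul]
    split_ifs <;> [ring; rfl]
  calc ∑ v : V, transP E w u v
      = ∑ v ∈ Finset.univ.filter (fun v => E u v), (w u v : ℝ≥0∞) * S⁻¹ := by
        rw [Finset.sum_filter]; exact Finset.sum_congr rfl fun v _ => step v
    _ = S * S⁻¹ := by rw [← Finset.sum_mul, hS]
    _ = 1 := ENNReal.mul_inv_cancel hS0 hStop

@[simp] lemma pathP_single (u : V) : pathP E w [u] = 1 := rfl

lemma pathP_cons (u v : V) (l : List V) :
    pathP E w (u :: v :: l) = transP E w u v * pathP E w (v :: l) := rfl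

lemma sum_pathP (hE : ∀ v, ∃ u, E v u) (hw : ∀ u v, E u v → 0 < w u v) (u : V) (m : ℕ) :
    ∑ x : Fin m → V, pathP E w (u :: List.ofFn x) = 1 := by
  induction m generalizing u with
  | zero => simp
  | succ m ih =>
    rw [← (Fin.consEquiv (fun _ : Fin (m+1) => V)).sum_comp (fun x => pathP E w (u :: List.ofFn x))]
    rw [Fintype.sum_prod_type]
    have : ∀ (v : V) (y : Fin m → V),
        pathP E w (u :: List.ofFn ((Fin.consEquiv (fun _ : Fin (m+1) => V)) (v, y)))
          = transP E w u v * pathP E w (v :: List.ofFn y) := by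
      intro v y
      rw [show List.ofFn ((Fin.consEquiv (fun _ : Fin (m+1) => V)) (v, y)) = v :: List.ofFn y by
        simp [Fin.consEquiv, List.ofFn_succ]]
      exact pathP_cons u v _
    simp only [this, ← Finset.mul_sum]
    simp only [ih]
    simpa using transP_sum_eq_one hE hw u

lemma pathP_eq_zero_of_not_chain {π : List V} (h : ¬ π.Chain' E) : pathP E w π = 0 := by
  change ¬ List.IsChain E π at h
  rw [List.isChain_iff_getElem] at h
  push_neg at h
  obtain ⟨i, hi, hne⟩ := h
  apply List.prod_eq_zero
  refine List.mem_map.mpr ⟨(π.get ⟨i, by omega⟩, π.get ⟨i+1, by omega⟩), ?_, ?_⟩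
  · have hz : (π.zip π.tail)[i]'(by simp [List.length_zip]; omega)
        = (π[i]'(by omega), π.tail[i]'(by simp [List.length_tail]; omega)) :=
      List.getElem_zip
    rw [show (π.get ⟨i, by omega⟩, π.get ⟨i+1, by omega⟩)
        = (π[i]'(by omega), π.tail[i]'(by simp [List.length_tail]; omega)) by
      simp [List.getElem_tail]]
    rw [← hz]
    exact List.getElem_mem _
  · simp only [List.get_eq_getElem]
    simp [transP, hne]


lemma prefix_append_prefix {π τ σ : List V} (h : τ <+: σ) : π ++ τ <+: π ++ σ := by
  obtain ⟨t, rfl⟩ := h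
  exact ⟨t, by simp⟩

lemma IsPos.ne_nil {E : V → V → Prop} {v₀ : V} {π : List V} (h : IsPos E v₀ π) : π ≠ [] := by
  rintro rfl; simp [IsPos] at h

lemma null_of_not_pos (hP : IsReasonable E v₀ w P) (hE : ∀ v, ∃ u, E v u)
    (hw : ∀ u v, E u v → 0 < w u v) {π : List V} (hne : π ≠ []) (hpos : ¬ IsPos E v₀ π) :
    P (Cyl π) = 0 := by
  obtain ⟨hprob, hcyl⟩ := hP
  match π, hne with
  | a :: rest, _ =>
  by_cases ha : a = v₀
  · subst ha
    have hch : ¬ (a :: rest).Chain' E := fun h => hpos ⟨rfl, h⟩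
    rw [hcyl (a :: rest) rfl, pathP_eq_zero_of_not_chain hch]
  · set m := rest.length with hm
    have hU : P (⋃ y : Fin m → V, Cyl (v₀ :: List.ofFn y)) = 1 := by
      rw [measure_iUnion ?_ (fun y => measurableSet_Cyl _), tsum_fintype]
      · have h1 : ∀ y : Fin m → V, P (Cyl (v₀ :: List.ofFn y)) = pathP E w (v₀ :: List.ofFn y) :=
          fun y => hcyl _ rfl
        simp only [h1]
        exact sum_pathP hE hw v₀ m
      · intro x y hxy
        refine Cyl_disjoint (by simp) (fun h => hxy ?_)
        exact List.ofFn_inj.mp (by injection h)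
    have hsub : Cyl (a :: rest) ⊆ (⋃ y : Fin m → V, Cyl (v₀ :: List.ofFn y))ᶜ := by
      intro ρ hρ hmem
      simp only [Set.mem_iUnion] at hmem
      obtain ⟨y, hy⟩ := hmem
      rw [mem_Cyl] at hρ hy
      have hl : (v₀ :: List.ofFn y).length = (a :: rest).length := by simp [hm]
      have : a :: rest = v₀ :: List.ofFn y := by
        rw [← hρ, ← hy]; congr 1; exact hl.symm
      exact ha (by injection this with h1 _)
    refine le_antisymm ?_ zero_le
    calc P (Cyl (a :: rest)) ≤ P ((⋃ y : Fin m → V, Cyl (v₀ :: List.ofFn y))ᶜ) :=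
          measure_mono hsub
      _ = 0 := by
          rw [measure_compl (MeasurableSet.iUnion fun y => measurableSet_Cyl _)
            (measure_ne_top P _), hU, measure_univ, tsub_self]

/-- `ρ` matches the proposal of `f` at position `n`. -/
def MatchAt (f : List V → Finset (List V)) (ρ : ℕ → V) (n : ℕ) : Prop :=
  ∃ τ, τ ∈ f (pref ρ n) ∧ pref ρ (n + τ.length) = pref ρ n ++ τ

lemma fail_bound (hP : IsReasonable E v₀ w P) (hE : ∀ v, ∃ u, E v u)
    (hw : ∀ u v, E u v → 0 < w u v) {f : List V → Finset (List V)} {α : ℝ} (hα : 0 < α)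
    (hf : IsAlphaStrategy E v₀ P α f) (N : ℕ) (k : ℕ) :
    ∀ (π : List V), IsPos E v₀ π → N ≤ π.length →
      P ({ρ | ∀ m, N ≤ m → ¬ MatchAt f ρ m} ∩ Cyl π)
        ≤ (1 - ENNReal.ofReal (min α 1)) ^ k * P (Cyl π) := by
  have hprob : IsProbabilityMeasure P := hP.1
  classical
  set a := ENNReal.ofReal (min α 1) with haa
  have ha0 : a ≠ 0 := (ENNReal.ofReal_pos.mpr (lt_min hα one_pos)).ne'
  have ha1 : a ≤ 1 := by
    rw [haa, show (1 : ℝ≥0∞) = ENNReal.ofReal 1 by simp]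
    exact ENNReal.ofReal_le_ofReal (min_le_right _ _)
  set F := {ρ : ℕ → V | ∀ m, N ≤ m → ¬ MatchAt f ρ m} with hF
  induction k with
  | zero => intro π hπ hN; simpa using measure_mono Set.inter_subset_right
  | succ k ih =>
    intro π hπ hN
    set n := π.length with hn
    obtain ⟨hPs_ne, hPs_path, hPs_prob⟩ := hf π hπ
    set T := P (Cyl π) with hT
    by_cases hT0 : T = 0
    · calc P (F ∩ Cyl π) ≤ T := measure_mono Set.inter_subset_right
        _ ≤ _ := by rw [hT0]; simp
    have hTtop : T ≠ ⊤ := measure_ne_top P _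
    set U := ⋃ τ ∈ f π, Cyl (π ++ τ) with hU
    have haU : a * T ≤ P U := by
      have h1 : a ≤ P U / T :=
        le_trans (ENNReal.ofReal_le_ofReal (min_le_left α 1)) hPs_prob
      rwa [ENNReal.le_div_iff_mul_le (Or.inl hT0) (Or.inl hTtop)] at h1
    set L := (f π).sup List.length with hL
    have hLτ : ∀ τ ∈ f π, τ.length ≤ L := fun τ h => Finset.le_sup h
    set Bad : Finset (Fin L → V) :=
      Finset.univ.filter (fun x => ∀ τ ∈ f π, ¬ τ <+: List.ofFn x) with hBad
    -- the canonical extension of ρ ∈ Cyl π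
    have hext : ∀ ρ ∈ Cyl π, ρ ∈ Cyl (π ++ List.ofFn (fun i : Fin L => ρ (n + i))) :=
      fun ρ hρ => mem_Cyl_append.mpr ⟨hρ, fun i => rfl⟩
    -- U is covered by the non-Bad extensions
    have hUsub : U ⊆ ⋃ x ∈ Finset.univ.filter (fun x : Fin L → V =>
        ¬ ∀ τ ∈ f π, ¬ τ <+: List.ofFn x), Cyl (π ++ List.ofFn x) := by
      intro ρ hρ
      simp only [hU, Set.mem_iUnion] at hρ
      obtain ⟨τ, hτ, hρτ⟩ := hρ
      have hρπ : ρ ∈ Cyl π := Cyl_append_subset π τ hρτ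
      refine Set.mem_iUnion₂.mpr ⟨fun i : Fin L => ρ (n + i), ?_, hext ρ hρπ⟩
      simp only [Finset.mem_filter, Finset.mem_univ, true_and]
      push_neg
      exact ⟨τ, hτ, prefix_of_mem_both (hLτ τ hτ) (hext ρ hρπ) hρτ⟩
    -- decomposition of T
    have hdec : ∑ x ∈ Bad, P (Cyl (π ++ List.ofFn x)) + P U ≤ T := by
      have h2 : P U ≤ ∑ x ∈ Finset.univ.filter (fun x : Fin L → V =>
          ¬ ∀ τ ∈ f π, ¬ τ <+: List.ofFn x), P (Cyl (π ++ List.ofFn x)) :=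
        le_trans (measure_mono hUsub) (measure_biUnion_finset_le _ _)
      calc ∑ x ∈ Bad, P (Cyl (π ++ List.ofFn x)) + P U
          ≤ ∑ x ∈ Bad, P (Cyl (π ++ List.ofFn x)) +
            ∑ x ∈ Finset.univ.filter (fun x : Fin L → V =>
              ¬ ∀ τ ∈ f π, ¬ τ <+: List.ofFn x), P (Cyl (π ++ List.ofFn x)) := by
            exact add_le_add_right h2 _
        _ = ∑ x : Fin L → V, P (Cyl (π ++ List.ofFn x)) := by
            rw [hBad, Finset.sum_filter_add_sum_filter_not]
        _ = T := (measure_Cyl_eq_sum P π L).symm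
    have hBadsum : ∑ x ∈ Bad, P (Cyl (π ++ List.ofFn x)) ≤ (1 - a) * T := by
      rw [ENNReal.sub_mul (fun _ _ => hTtop), one_mul]
      have hcan : AddLECancellable (a * T) :=
        ENNReal.cancel_of_ne (by
          exact ne_top_of_le_ne_top hTtop (le_trans (mul_le_mul_left ha1 T) (by rw [one_mul])))
      exact hcan.le_tsub_of_add_le_right (le_trans (add_le_add_right haU _) hdec)
    -- F ∩ Cyl π is covered by the Bad extensions
    have hFsub : F ∩ Cyl π ⊆ ⋃ x ∈ Bad, F ∩ Cyl (π ++ List.ofFn x) := by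
      rintro ρ ⟨hρF, hρπ⟩
      refine Set.mem_iUnion₂.mpr ⟨fun i : Fin L => ρ (n + i), ?_, hρF, hext ρ hρπ⟩
      simp only [hBad, Finset.mem_filter, Finset.mem_univ, true_and]
      intro τ hτ hpre
      refine hρF n hN ⟨τ, ?_, ?_⟩
      · rw [show pref ρ n = π from hρπ]; exact hτ
      · have h3 : ρ ∈ Cyl (π ++ τ) := Cyl_mono (prefix_append_prefix hpre) (hext ρ hρπ)
        rw [mem_Cyl, List.length_append] at h3
        rw [show pref ρ n = π from hρπ]
        exact h3
    calc P (F ∩ Cyl π) ≤ ∑ x ∈ Bad, P (F ∩ Cyl (π ++ List.ofFn x)) :=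
          le_trans (measure_mono hFsub) (measure_biUnion_finset_le _ _)
      _ ≤ ∑ x ∈ Bad, (1 - a) ^ k * P (Cyl (π ++ List.ofFn x)) := by
          refine Finset.sum_le_sum fun x hx => ?_
          by_cases hpos : IsPos E v₀ (π ++ List.ofFn x)
          · exact ih _ hpos (le_trans hN (by simp [hn]))
          · have h0 : P (Cyl (π ++ List.ofFn x)) = 0 :=
              null_of_not_pos hP hE hw (by simp [hπ.ne_nil]) hpos
            calc P (F ∩ Cyl (π ++ List.ofFn x)) ≤ P (Cyl (π ++ List.ofFn x)) :=
                  measure_mono Set.inter_subset_right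
              _ ≤ _ := by rw [h0]; simp
      _ = (1 - a) ^ k * ∑ x ∈ Bad, P (Cyl (π ++ List.ofFn x)) := by
          rw [Finset.mul_sum]
      _ ≤ (1 - a) ^ k * ((1 - a) * T) := mul_le_mul_right hBadsum _
      _ = (1 - a) ^ (k + 1) * T := by ring



lemma pref_eq_ofFn (ρ : ℕ → V) (m : ℕ) : pref ρ m = List.ofFn (fun i : Fin m => ρ i) := by
  simpa [show pref ρ 0 = [] from rfl] using pref_add ρ 0 m

lemma null_not_play (hP : IsReasonable E v₀ w P) (hE : ∀ v, ∃ u, E v u)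
    (hw : ∀ u v, E u v → 0 < w u v) :
    P {ρ : ℕ → V | ¬ IsPlay E v₀ ρ} = 0 := by
  classical
  have hZ : ∀ m : ℕ, P {ρ : ℕ → V | ¬ IsPos E v₀ (pref ρ (m + 1))} = 0 := by
    intro m
    have hsub : {ρ : ℕ → V | ¬ IsPos E v₀ (pref ρ (m + 1))} ⊆
        ⋃ x ∈ Finset.univ.filter (fun x : Fin (m + 1) → V => ¬ IsPos E v₀ (List.ofFn x)),
          Cyl (List.ofFn x) := by
      intro ρ hρ
      refine Set.mem_iUnion₂.mpr ⟨fun i : Fin (m + 1) => ρ i, ?_, ?_⟩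
      · simp only [Finset.mem_filter, Finset.mem_univ, true_and]
        rw [← pref_eq_ofFn]
        exact hρ
      · rw [mem_Cyl, List.length_ofFn, pref_eq_ofFn]
    refine le_antisymm ?_ zero_le
    refine le_trans (measure_mono hsub) (le_trans (measure_biUnion_finset_le _ _) ?_)
    refine le_of_eq (Finset.sum_eq_zero fun x hx => ?_)
    simp only [Finset.mem_filter, Finset.mem_univ, true_and] at hx
    exact null_of_not_pos hP hE hw (by simp) hx
  have hsub : {ρ : ℕ → V | ¬ IsPlay E v₀ ρ} ⊆
      ⋃ m : ℕ, {ρ : ℕ → V | ¬ IsPos E v₀ (pref ρ (m + 1))} := by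
    intro ρ hρ
    simp only [Set.mem_iUnion, Set.mem_setOf_eq]
    by_contra hcon
    push_neg at hcon
    refine hρ ⟨?_, ?_⟩
    · have h1 := (hcon 0).1
      simp only [pref, List.range_succ, List.range_zero, List.map_cons, List.map_nil, List.head?] at h1
      exact Option.some.inj h1
    · intro n
      have h2 := (hcon (n + 1)).2
      change List.IsChain E _ at h2
      rw [List.isChain_iff_getElem] at h2
      have := h2 n (by simp)
      simpa using this
  refine le_antisymm (le_trans (measure_mono hsub) (le_trans (measure_iUnion_le _) ?_))
    zero_le
  simp [hZ]

lemma null_fail (hP : IsReasonable E v₀ w P) (hE : ∀ v, ∃ u, E v u)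
    (hw : ∀ u v, E u v → 0 < w u v) {f : List V → Finset (List V)} {α : ℝ} (hα : 0 < α)
    (hf : IsAlphaStrategy E v₀ P α f) (N : ℕ) (hN : 1 ≤ N) :
    P {ρ : ℕ → V | ∀ m, N ≤ m → ¬ MatchAt f ρ m} = 0 := by
  classical
  have hprob : IsProbabilityMeasure P := hP.1
  set a := ENNReal.ofReal (min α 1) with haa
  have ha0 : a ≠ 0 := (ENNReal.ofReal_pos.mpr (lt_min hα one_pos)).ne'
  set F := {ρ : ℕ → V | ∀ m, N ≤ m → ¬ MatchAt f ρ m} with hF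
  have hbound : ∀ k : ℕ, P F ≤ (1 - a) ^ k := by
    intro k
    have hsub : F ⊆ ⋃ x : Fin N → V, F ∩ Cyl (List.ofFn x) := by
      intro ρ hρ
      refine Set.mem_iUnion.mpr ⟨fun i : Fin N => ρ i, hρ, ?_⟩
      rw [mem_Cyl, List.length_ofFn, pref_eq_ofFn]
    refine le_trans (measure_mono hsub) (le_trans (measure_iUnion_le _) ?_)
    rw [tsum_fintype]
    have hterm : ∀ x : Fin N → V, P (F ∩ Cyl (List.ofFn x)) ≤ (1 - a) ^ k * P (Cyl (List.ofFn x)) := by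
      intro x
      by_cases hpos : IsPos E v₀ (List.ofFn x)
      · exact fail_bound hP hE hw hα hf N k (List.ofFn x) hpos (by simp)
      · have h0 : P (Cyl (List.ofFn x)) = 0 :=
          null_of_not_pos hP hE hw (by simp; omega) hpos
        calc P (F ∩ Cyl (List.ofFn x)) ≤ P (Cyl (List.ofFn x)) :=
              measure_mono Set.inter_subset_right
          _ ≤ _ := by rw [h0]; simp
    calc ∑ x : Fin N → V, P (F ∩ Cyl (List.ofFn x))
        ≤ ∑ x : Fin N → V, (1 - a) ^ k * P (Cyl (List.ofFn x)) := Finset.sum_le_sum fun x _ => hterm x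
      _ = (1 - a) ^ k * ∑ x : Fin N → V, P (Cyl (List.ofFn x)) := by rw [Finset.mul_sum]
      _ = (1 - a) ^ k * P (Cyl ([] : List V)) := by
          rw [measure_Cyl_eq_sum P ([] : List V) N]; simp
      _ ≤ (1 - a) ^ k := by
          rw [Cyl_nil, measure_univ, mul_one]
  have hlt : (1 - a) < 1 := ENNReal.sub_lt_self ENNReal.one_ne_top one_ne_zero ha0
  have htend : Filter.Tendsto (fun k : ℕ => (1 - a) ^ k) Filter.atTop (nhds 0) :=
    ENNReal.tendsto_pow_atTop_nhds_zero_of_lt_one hlt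
  have := ge_of_tendsto' htend hbound
  exact le_antisymm this zero_le


end Meas


end BMGame

open BMGame

/-- If Player 0 has a winning α-strategy for `(G, v₀, W)` for some `α > 0`, then
`P (W) = 1`. -/
theorem stmt12 {V : Type*} [Fintype V] [MeasurableSpace V] [DiscreteMeasurableSpace V]
    (E : V → V → Prop) (hE : ∀ v, ∃ u, E v u) (v₀ : V)
    (W : Set (ℕ → V)) (hW : W ⊆ {ρ | IsPlay E v₀ ρ})
    (w : V → V → ℝ≥0) (hw : ∀ u v, E u v → 0 < w u v)
    (P : MeasureTheory.Measure (ℕ → V)) (hP : IsReasonable E v₀ w P)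
    (halpha : ∃ α : ℝ, 0 < α ∧ ∃ f : List V → Finset (List V), AlphaWinning E v₀ P α W f) :
    P Wᶜ = 0 := by
  classical
  obtain ⟨α, hα, f, hstrat, hwin⟩ := halpha
  have hcover : Wᶜ ⊆ {ρ : ℕ → V | ¬ IsPlay E v₀ ρ} ∪
      ⋃ N : ℕ, {ρ : ℕ → V | ∀ m, N + 1 ≤ m → ¬ MatchAt f ρ m} := by
    intro ρ hρ
    by_cases hplay : IsPlay E v₀ ρ
    · right
      simp only [Set.mem_iUnion, Set.mem_setOf_eq]
      by_contra hcon
      push_neg at hcon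
      set wit : ℕ → List V := fun n => if h : MatchAt f ρ n then h.choose else [] with hwitdef
      have hwit : ∀ n, MatchAt f ρ n →
          wit n ∈ f (pref ρ n) ∧ pref ρ (n + (wit n).length) = pref ρ n ++ wit n := by
        intro n h
        simp only [hwitdef, dif_pos h]
        exact h.choose_spec
      set c : ℕ → ℕ := fun i => Nat.rec (hcon 0).choose
        (fun _ ci => (hcon (ci + (wit ci).length)).choose) i with hcdef
      have hcs : ∀ i, c (i + 1) = (hcon (c i + (wit (c i)).length)).choose := fun i => rfl
      have hmatch : ∀ i, MatchAt f ρ (c i) := by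
        intro i
        cases i with
        | zero => exact (hcon 0).choose_spec.2
        | succ i => rw [hcs]; exact (hcon _).choose_spec.2
      have hlt : ∀ i, c i + (wit (c i)).length < c (i + 1) := by
        intro i
        rw [hcs]
        have := (hcon (c i + (wit (c i)).length)).choose_spec.1
        omega
      refine hρ (hwin ρ hplay ⟨c, ?_, fun i => ⟨wit (c i), (hwit _ (hmatch i)).1,
        (hwit _ (hmatch i)).2, hlt i⟩⟩)
      have h0 := (hcon 0).choose_spec.1
      rw [show c 0 = (hcon 0).choose from rfl]
      omega
    · left; exact hplay
  have h1 := null_not_play hP hE hw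
  have h2 : ∀ N : ℕ, P {ρ : ℕ → V | ∀ m, N + 1 ≤ m → ¬ MatchAt f ρ m} = 0 :=
    fun N => null_fail hP hE hw hα hstrat (N + 1) (by omega)
  refine le_antisymm ?_ zero_le
  calc P Wᶜ ≤ P ({ρ : ℕ → V | ¬ IsPlay E v₀ ρ} ∪
        ⋃ N : ℕ, {ρ : ℕ → V | ∀ m, N + 1 ≤ m → ¬ MatchAt f ρ m}) := measure_mono hcover
    _ ≤ P {ρ : ℕ → V | ¬ IsPlay E v₀ ρ} +
        P (⋃ N : ℕ, {ρ : ℕ → V | ∀ m, N + 1 ≤ m → ¬ MatchAt f ρ m}) := measure_union_le _ _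
    _ ≤ 0 + ∑' N : ℕ, P {ρ : ℕ → V | ∀ m, N + 1 ≤ m → ¬ MatchAt f ρ m} :=
        add_le_add (le_of_eq h1) (measure_iUnion_le _)
    _ = 0 := by simp only [h2, tsum_zero, add_zero]
end

section
/- Let (G,v₀,W) be a Banach–Mazur game on a finite graph. Player 0 has a bounded move-counting winning strategy for (G,v₀,W) if and only if Player 0 has a positional winning strategy for (G,v₀,W). -/
open MeasureTheory
open scoped ENNReal NNReal

open BMGame
namespace BMGame


section Helpers

variable {V : Type*}

/-- `l` occurs as the block of `ρ` starting at position `a`. -/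
def Blk (ρ : ℕ → V) (a : ℕ) (l : List V) : Prop :=
  (List.range l.length).map (fun j => ρ (a + j)) = l

theorem pref'_iff_blk (ρ : ℕ → V) (a : ℕ) (l : List V) :
    ((List.range (a + l.length)).map ρ = (List.range a).map ρ ++ l) ↔ Blk ρ a l := by
  rw [List.range_add, List.map_append, List.map_map, List.append_right_inj]
  rfl

theorem Blk.get {ρ : ℕ → V} {a : ℕ} {l : List V} (hb : Blk ρ a l) :
    ∀ j, (hj : j < l.length) → ρ (a + j) = l[j] := by
  intro j hj
  have h2 := congrArg (fun t => t[j]?) hb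
  simp only [List.getElem?_map, List.getElem?_range, hj, if_pos, List.getElem?_eq_getElem hj] at h2
  simpa using h2

theorem Blk.append {ρ : ℕ → V} {a : ℕ} {l₁ l₂ : List V} (hb : Blk ρ a (l₁ ++ l₂)) :
    Blk ρ a l₁ ∧ Blk ρ (a + l₁.length) l₂ := by
  unfold Blk at hb ⊢
  rw [List.length_append, List.range_add, List.map_append, List.map_map] at hb
  have := List.append_inj hb (by simp)
  refine ⟨this.1, ?_⟩
  have hfe : (fun j => ρ (a + l₁.length + j)) = ((fun j => ρ (a + j)) ∘ fun x => l₁.length + x) := by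
    funext j; simp [Nat.add_assoc]
  show List.map (fun j => ρ (a + l₁.length + j)) (List.range l₂.length) = l₂
  rw [hfe]
  exact this.2

end Helpers
end BMGame

namespace BMGame
section Build

variable {V : Type*}

/-- Concatenate the moves prescribed by the list of profiles `L`, starting at `v`. -/
def pbuild : V → List (V → List V) → List V
  | _, [] => []
  | v, q :: L => q v ++ pbuild ((q v).getLast?.getD v) L

/-- Every profile in `L` is a valid one-step strategy. -/
def PValid (E : V → V → Prop) (L : List (V → List V)) : Prop :=
  ∀ q ∈ L, ∀ w, q w ≠ [] ∧ (w :: q w).Chain' E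

theorem pbuild_chain {E : V → V → Prop} {L : List (V → List V)} (hL : PValid E L) :
    ∀ v, (v :: pbuild v L).Chain' E := by
  induction L with
  | nil => intro v; simp [pbuild]; exact List.isChain_singleton v
  | cons q L ih =>
    intro v
    have h1 : (v :: q v).Chain' E := (hL q List.mem_cons_self v).2
    have h2 := ih (fun q' hq' => hL q' (List.mem_cons_of_mem _ hq')) ((q v).getLast?.getD v)
    have heq : (v :: pbuild v (q :: L)) = (v :: q v) ++ pbuild ((q v).getLast?.getD v) L := by
      simp [pbuild]
    rw [heq]
    refine List.IsChain.append h1 (List.isChain_cons.mp h2).2 ?_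
    intro x hx y hy
    rw [List.getLast?_cons] at hx
    simp only [Option.mem_def, Option.some.injEq] at hx
    subst hx
    exact (List.isChain_cons.mp h2).1 y hy

theorem pbuild_factor {E : V → V → Prop} {ρ : ℕ → V} {L : List (V → List V)} (hL : PValid E L) :
    ∀ v c, 1 ≤ c → ρ (c - 1) = v → Blk ρ c (pbuild v L) →
      ∀ q ∈ L, ∃ d, 1 ≤ d ∧ c ≤ d ∧
        d + (q (ρ (d - 1))).length ≤ c + (pbuild v L).length ∧ Blk ρ d (q (ρ (d - 1))) := by
  induction L with
  | nil => intro v c _ _ _ q hq; exact absurd hq List.not_mem_nil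
  | cons q' L ih =>
    intro v c hc hv hblk q hq
    have hsplit : Blk ρ c (q' v) ∧ Blk ρ (c + (q' v).length) (pbuild ((q' v).getLast?.getD v) L) := by
      have : pbuild v (q' :: L) = q' v ++ pbuild ((q' v).getLast?.getD v) L := rfl
      rw [this] at hblk
      exact hblk.append
    have hlen : (pbuild v (q' :: L)).length = (q' v).length + (pbuild ((q' v).getLast?.getD v) L).length := by
      simp [pbuild]
    rcases List.mem_cons.mp hq with rfl | hq
    · refine ⟨c, hc, le_rfl, ?_, ?_⟩
      · rw [hv, hlen]; omega
      · rw [hv]; exact hsplit.1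
    · -- recurse on the tail
      have hnext : ρ (c + (q' v).length - 1) = (q' v).getLast?.getD v := by
        rcases eq_or_ne (q' v) [] with he | he
        · simp [he, hv]
        · have hpos : 0 < (q' v).length := List.length_pos_iff.mpr he
          have := hsplit.1.get ((q' v).length - 1) (by omega)
          rw [List.getLast?_eq_getElem?, List.getElem?_eq_getElem (by omega : (q' v).length - 1 < (q' v).length)]
          simp only [Option.getD_some]
          rw [← this]
          congr 1
          omega
      obtain ⟨d, hd1, hd2, hd3, hd4⟩ :=
        ih (fun q'' hq'' => hL q'' (List.mem_cons_of_mem _ hq'')) ((q' v).getLast?.getD v)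
          (c + (q' v).length) (by omega) hnext hsplit.2 q hq
      exact ⟨d, hd1, by omega, by rw [hlen]; omega, hd4⟩

end Build
end BMGame


/-- Player 0 has a bounded move-counting winning strategy for a Banach–Mazur game
`(G, v₀, W)` on a finite graph if and only if Player 0 has a positional winning
strategy for it. -/
theorem stmt16 {V : Type*} [Fintype V] (E : V → V → Prop) (hE : ∀ v, ∃ u, E v u)
    (v₀ : V) (W : Set (ℕ → V)) (hW : W ⊆ {ρ | IsPlay E v₀ ρ}) :
    (∃ (h : V → ℕ → List V) (b : ℕ), 1 ≤ b ∧ MoveCountingWinning E v₀ W h ∧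
        ∀ v n, 1 ≤ n → (h v n).length ≤ b) ↔
      ∃ f : V → List V, PositionalWinning E v₀ W f := by
  constructor
  · -- bounded move-counting ⇒ positional
    rintro ⟨h, b, hb, ⟨hcs, hwin⟩, hbd⟩
    classical
    -- the set of profiles used by h is finite
    set P : Set (V → List V) := Set.range (fun n => fun v => h v (n + 1)) with hP
    have hPfin : P.Finite := by
      refine Set.Finite.subset (Set.Finite.pi (fun _ : V => List.finite_length_le V b)) ?_
      rintro g ⟨n, rfl⟩
      rw [Set.mem_univ_pi]
      intro v
      exact hbd v (n + 1) (by omega)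
    set qs : List (V → List V) := hPfin.toFinset.toList with hqs
    have hmem : ∀ n : ℕ, (fun v => h v (n + 1)) ∈ qs := by
      intro n
      rw [hqs, Finset.mem_toList, Set.Finite.mem_toFinset]
      exact ⟨n, rfl⟩
    have hvalid : PValid E qs := by
      intro q hq w
      rw [hqs, Finset.mem_toList, Set.Finite.mem_toFinset] at hq
      obtain ⟨n, rfl⟩ := hq
      exact hcs w (n + 1) (by omega)
    refine ⟨fun v => pbuild v qs, ?_, ?_⟩
    · -- it is a positional strategy
      intro v
      refine ⟨?_, pbuild_chain hvalid v⟩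
      have h0 := hmem 0
      cases hq : qs with
      | nil => rw [hq] at h0; exact absurd h0 List.not_mem_nil
      | cons q L =>
        have : q v ≠ [] := (hvalid q (by rw [hq]; exact List.mem_cons_self) v).1
        show pbuild v (q :: L) ≠ []
        simp [pbuild, this]
    · -- it is winning
      intro ρ hplay hcons
      obtain ⟨c, hc0, hc⟩ := hcons
      have hcmono : StrictMono c := strictMono_nat_of_lt_succ (fun i =>
        lt_of_le_of_lt (Nat.le_add_right _ _) (hc i).2)
      have hc1 : ∀ i, 1 ≤ c i := fun i => le_trans hc0 (hcmono.monotone (Nat.zero_le i))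
      have hKEY : ∀ M n : ℕ, ∃ d, M < d ∧ Blk ρ d (h (ρ (d - 1)) (n + 1)) := by
        intro M n
        have hgt : M < c (M + 1) := lt_of_lt_of_le (Nat.lt_succ_self M) (hcmono.le_apply)
        have hblk : Blk ρ (c (M + 1)) (pbuild (ρ (c (M + 1) - 1)) qs) :=
          (pref'_iff_blk ρ (c (M + 1)) _).mp (hc (M + 1)).1
        obtain ⟨d, _, hd2, _, hd4⟩ := pbuild_factor hvalid (ρ (c (M + 1) - 1)) (c (M + 1))
          (hc1 _) rfl hblk (fun v => h v (n + 1)) (hmem n)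
        exact ⟨d, lt_of_lt_of_le hgt hd2, hd4⟩
      choose D hD1 hD2 using hKEY
      set d : ℕ → ℕ := fun k =>
        Nat.rec (D 0 0) (fun i prev => D (prev + (h (ρ (prev - 1)) (i + 1)).length) (i + 1)) k
        with hd
      refine hwin ρ hplay ⟨d, ?_, ?_⟩
      · exact hD1 0 0
      · intro i
        have hstep : d (i + 1) = D (d i + (h (ρ (d i - 1)) (i + 1)).length) (i + 1) := rfl
        refine ⟨?_, ?_⟩
        · cases i with
          | zero => exact (pref'_iff_blk ρ (d 0) _).mpr (hD2 0 0)
          | succ j =>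
            have := hD2 (d j + (h (ρ (d j - 1)) (j + 1)).length) (j + 1)
            exact (pref'_iff_blk ρ (d (j + 1)) _).mpr this
        · rw [hstep]
          exact hD1 (d i + (h (ρ (d i - 1)) (i + 1)).length) (i + 1)
  · -- positional ⇒ bounded move-counting
    rintro ⟨f, hpos, hwin⟩
    classical
    refine ⟨fun v _ => f v, (Finset.univ.sup fun v => (f v).length) + 1, by omega, ⟨?_, ?_⟩, ?_⟩
    · intro v n _
      exact hpos v
    · intro ρ hplay hcons
      obtain ⟨c, hc0, hc⟩ := hcons
      exact hwin ρ hplay ⟨c, hc0, hc⟩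
    · intro v n _
      have : (f v).length ≤ Finset.univ.sup fun v => (f v).length :=
        Finset.le_sup (f := fun v => (f v).length) (Finset.mem_univ v)
      show (f v).length ≤ (Finset.univ.sup fun v => (f v).length) + 1
      omega
end
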